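/- arXiv:2407.04758 — 3 statements merged into one kernel-verified Lean document; each statement's English description precedes it below -/
import Mathlib

section
/- (Pólya, recurrent case) Let d ∈ {1, 2} and let (Z_i)_{i≥1} be i.i.d. random variables uniformly distributed on the 2d unit coordinate vectors {±e_1, ..., ±e_d} of ℤ^d, and let X_n = Z_1 + ... + Z_n (X_0 = 0) be the simple random walk on ℤ^d. Then almost surely X_n = 0 for infinitely many n; i.e., the simple random walk on ℤ^d is recurrent for d = 1, 2. -/
open MeasureTheory ProbabilityTheory Filter

open scoped ENNReal NNReal

namespace PolyaProof

variable {Ω : Type*} [MeasurableSpace Ω] {P : Measure Ω} [IsProbabilityMeasure P]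
  {d : ℕ} {Z : ℕ → Ω → (Fin d → ℤ)}

/-- the one-step distribution. -/
noncomputable def c (d : ℕ) : (Fin d → ℤ) → ℝ≥0∞ := fun v =>
  if (∃ j, v = Pi.single j 1 ∨ v = -Pi.single j 1) then (2 * d : ℝ≥0∞)⁻¹ else 0

lemma c_neg (v : Fin d → ℤ) : c d (-v) = c d v := by
  unfold c
  refine if_congr ⟨fun ⟨j, h⟩ => ⟨j, ?_⟩, fun ⟨j, h⟩ => ⟨j, ?_⟩⟩ rfl rfl
  · rcases h with h | h
    · exact Or.inr (by rw [← h, neg_neg])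
    · exact Or.inl (by rw [neg_eq_iff_eq_neg.mp h, neg_neg])
  · rcases h with h | h
    · exact Or.inr (by rw [h])
    · exact Or.inl (by rw [h, neg_neg])

lemma meas_Z_eq (hval : ∀ i ω, ∃ j : Fin d, Z i ω = Pi.single j 1 ∨ Z i ω = -Pi.single j 1)
    (hunif : ∀ i (j : Fin d),
      P {ω | Z i ω = Pi.single j 1} = 1 / (2 * (d : ENNReal)) ∧
      P {ω | Z i ω = -Pi.single j 1} = 1 / (2 * (d : ENNReal)))
    (i : ℕ) (v : Fin d → ℤ) : P {ω | Z i ω = v} = c d v := by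
  by_cases h : ∃ j, v = Pi.single j 1 ∨ v = -Pi.single j 1
  · simp only [c]; rw [if_pos h]
    obtain ⟨j, hj | hj⟩ := h <;> subst hj
    · rw [(hunif i j).1, one_div]
    · rw [(hunif i j).2, one_div]
  · simp only [c]; rw [if_neg h]
    have : {ω | Z i ω = v} = (∅ : Set Ω) := by
      ext ω
      simp only [Set.mem_setOf_eq, Set.mem_empty_iff_false, iff_false]
      intro hv
      obtain ⟨j, hj⟩ := hval i ω
      exact h ⟨j, by rwa [← hv]⟩
    rw [this, measure_empty]

lemma meas_tuple (hval : ∀ i ω, ∃ j : Fin d, Z i ω = Pi.single j 1 ∨ Z i ω = -Pi.single j 1)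
    (hunif : ∀ i (j : Fin d),
      P {ω | Z i ω = Pi.single j 1} = 1 / (2 * (d : ENNReal)) ∧
      P {ω | Z i ω = -Pi.single j 1} = 1 / (2 * (d : ENNReal)))
    (hindep : iIndepFun Z P)
    (m n : ℕ) (a : Fin n → Fin d → ℤ) :
    P {ω | ∀ i : Fin n, Z (m + i) ω = a i} = ∏ i : Fin n, c d (a i) := by
  classical
  set b : ℕ → (Fin d → ℤ) := fun i => if h : i - m < n then a ⟨i - m, h⟩ else 0 with hb
  have hbm : ∀ i : Fin n, b (m + i) = a i := by
    intro i
    have h1 : m + (i : ℕ) - m = (i : ℕ) := by omega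
    simp only [hb, h1, i.isLt, dif_pos]
  set S : Finset ℕ := (Finset.range n).map ⟨fun k => m + k, add_right_injective m⟩ with hS
  have hset : {ω | ∀ i : Fin n, Z (m + i) ω = a i} = ⋂ i ∈ S, Z i ⁻¹' {b i} := by
    ext ω
    simp only [Set.mem_setOf_eq, Set.mem_iInter, hS, Finset.mem_map, Finset.mem_range,
      Function.Embedding.coeFn_mk, Set.mem_preimage, Set.mem_singleton_iff]
    constructor
    · rintro h i ⟨k, hk, rfl⟩
      have := h ⟨k, hk⟩
      rw [hbm ⟨k, hk⟩] at *
      exact this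
    · intro h i
      have := h (m + i) ⟨i, i.isLt, rfl⟩
      rwa [hbm i] at this
  have hprod := hindep.measure_inter_preimage_eq_mul S
    (sets := fun i => {b i}) (fun i _ => measurableSet_singleton _)
  rw [hset, hprod]
  have : ∀ i ∈ S, P (Z i ⁻¹' {b i}) = c d (b i) := fun i _ => meas_Z_eq hval hunif i (b i)
  rw [Finset.prod_congr rfl this, hS, Finset.prod_map]
  simp only [Function.Embedding.coeFn_mk]
  rw [← Fin.prod_univ_eq_prod_range (fun k => c d (b (m + k))) n]
  exact Finset.prod_congr rfl fun i _ => by rw [hbm i]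


/-- Cylinder event: the block `Z m, ..., Z (m+n-1)` as a tuple lies in `A`. -/
def cylSet (Z : ℕ → Ω → (Fin d → ℤ)) (m n : ℕ) (A : Set (Fin n → Fin d → ℤ)) : Set Ω :=
  (fun ω (i : Fin n) => Z (m + i) ω) ⁻¹' A

lemma cylSet_eq_iUnion (m n : ℕ) (A : Set (Fin n → Fin d → ℤ)) :
    cylSet Z m n A = ⋃ a : A, {ω | ∀ i : Fin n, Z (m + i) ω = (a : Fin n → Fin d → ℤ) i} := by
  ext ω
  simp only [cylSet, Set.mem_preimage, Set.mem_iUnion, Set.mem_setOf_eq]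
  constructor
  · intro h
    exact ⟨⟨_, h⟩, fun i => rfl⟩
  · rintro ⟨a, ha⟩
    have : (fun i : Fin n => Z (m + i) ω) = (a : Fin n → Fin d → ℤ) := funext ha
    rw [this]; exact a.2

lemma measurableSet_tuple (hmeas : ∀ i, Measurable (Z i)) (m n : ℕ) (a : Fin n → Fin d → ℤ) :
    MeasurableSet {ω | ∀ i : Fin n, Z (m + i) ω = a i} := by
  have : {ω | ∀ i : Fin n, Z (m + i) ω = a i} = ⋂ i : Fin n, Z (m + i) ⁻¹' {a i} := by
    ext ω; simp [Set.mem_iInter]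
  rw [this]
  exact MeasurableSet.iInter fun i => hmeas _ (measurableSet_singleton _)

lemma measurableSet_cylSet (hmeas : ∀ i, Measurable (Z i)) (m n : ℕ)
    (A : Set (Fin n → Fin d → ℤ)) : MeasurableSet (cylSet Z m n A) := by
  rw [cylSet_eq_iUnion]
  exact MeasurableSet.iUnion fun a => measurableSet_tuple hmeas m n a

lemma pairwise_disjoint_tuple (m n : ℕ) (A : Set (Fin n → Fin d → ℤ)) :
    Pairwise (Function.onFun Disjoint
      (fun a : A => {ω | ∀ i : Fin n, Z (m + i) ω = (a : Fin n → Fin d → ℤ) i})) := by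
  intro a a' haa'
  rw [Function.onFun]
  rw [Set.disjoint_left]
  intro ω h1 h2
  exact haa' (Subtype.ext (funext fun i => (h1 i).symm.trans (h2 i)))

lemma meas_cylSet (hmeas : ∀ i, Measurable (Z i))
    (hval : ∀ i ω, ∃ j : Fin d, Z i ω = Pi.single j 1 ∨ Z i ω = -Pi.single j 1)
    (hunif : ∀ i (j : Fin d),
      P {ω | Z i ω = Pi.single j 1} = 1 / (2 * (d : ENNReal)) ∧
      P {ω | Z i ω = -Pi.single j 1} = 1 / (2 * (d : ENNReal)))
    (hindep : iIndepFun Z P)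
    (m n : ℕ) (A : Set (Fin n → Fin d → ℤ)) :
    P (cylSet Z m n A) = ∑' a : A, ∏ i : Fin n, c d ((a : Fin n → Fin d → ℤ) i) := by
  rw [cylSet_eq_iUnion, measure_iUnion (pairwise_disjoint_tuple m n A)
    (fun a => measurableSet_tuple hmeas m n _)]
  exact tsum_congr fun a => meas_tuple hval hunif hindep m n _

lemma meas_cylSet_shift (hmeas : ∀ i, Measurable (Z i))
    (hval : ∀ i ω, ∃ j : Fin d, Z i ω = Pi.single j 1 ∨ Z i ω = -Pi.single j 1)
    (hunif : ∀ i (j : Fin d),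
      P {ω | Z i ω = Pi.single j 1} = 1 / (2 * (d : ENNReal)) ∧
      P {ω | Z i ω = -Pi.single j 1} = 1 / (2 * (d : ENNReal)))
    (hindep : iIndepFun Z P)
    (m m' n : ℕ) (A : Set (Fin n → Fin d → ℤ)) :
    P (cylSet Z m n A) = P (cylSet Z m' n A) := by
  rw [meas_cylSet hmeas hval hunif hindep, meas_cylSet hmeas hval hunif hindep]

lemma meas_cylSet_neg (hmeas : ∀ i, Measurable (Z i))
    (hval : ∀ i ω, ∃ j : Fin d, Z i ω = Pi.single j 1 ∨ Z i ω = -Pi.single j 1)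
    (hunif : ∀ i (j : Fin d),
      P {ω | Z i ω = Pi.single j 1} = 1 / (2 * (d : ENNReal)) ∧
      P {ω | Z i ω = -Pi.single j 1} = 1 / (2 * (d : ENNReal)))
    (hindep : iIndepFun Z P)
    (m n : ℕ) (A : Set (Fin n → Fin d → ℤ)) :
    P (cylSet Z m n {a | -a ∈ A}) = P (cylSet Z m n A) := by
  rw [meas_cylSet hmeas hval hunif hindep, meas_cylSet hmeas hval hunif hindep]
  let e : {a : Fin n → Fin d → ℤ | -a ∈ A} ≃ A :=
    ⟨fun a => ⟨-a.1, a.2⟩, fun a => ⟨-a.1, by simp only [Set.mem_setOf_eq, neg_neg]; exact a.2⟩,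
      fun a => by simp, fun a => by simp⟩
  rw [← Equiv.tsum_eq e (fun a : A => ∏ i : Fin n, c d ((a : Fin n → Fin d → ℤ) i))]
  refine tsum_congr fun a => Finset.prod_congr rfl fun i _ => ?_
  show c d (a.1 i) = c d ((e a : Fin n → Fin d → ℤ) i)
  have : (e a : Fin n → Fin d → ℤ) i = -(a.1 i) := rfl
  rw [this, c_neg]

lemma cyl_measurable_biSup (t : Set ℕ) (m n : ℕ) (ht : ∀ k : Fin n, (m + k : ℕ) ∈ t)
    (A : Set (Fin n → Fin d → ℤ)) :
    MeasurableSet[⨆ i ∈ t, MeasurableSpace.comap (Z i) inferInstance] (cylSet Z m n A) := by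
  rw [cylSet_eq_iUnion]
  refine MeasurableSet.iUnion fun a => ?_
  have : {ω | ∀ i : Fin n, Z (m + i) ω = (a : Fin n → Fin d → ℤ) i}
      = ⋂ i : Fin n, Z (m + i) ⁻¹' {(a : Fin n → Fin d → ℤ) i} := by
    ext ω; simp [Set.mem_iInter]
  rw [this]
  refine MeasurableSet.iInter fun i => ?_
  have h1 : MeasurableSet[MeasurableSpace.comap (Z (m + i)) inferInstance]
      (Z (m + i) ⁻¹' {(a : Fin n → Fin d → ℤ) i}) :=
    ⟨{(a : Fin n → Fin d → ℤ) i}, measurableSet_singleton _, rfl⟩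
  have h2 : MeasurableSpace.comap (Z (m + i)) inferInstance
      ≤ ⨆ j ∈ t, MeasurableSpace.comap (Z j) inferInstance := by
    have := ht i
    exact le_biSup (f := fun j => MeasurableSpace.comap (Z j) inferInstance) this
  exact h2 _ h1

lemma indep_cyl (hmeas : ∀ i, Measurable (Z i))
    (hindep : iIndepFun Z P)
    (m n : ℕ) (A : Set (Fin m → Fin d → ℤ)) (B : Set (Fin n → Fin d → ℤ)) :
    P (cylSet Z 0 m A ∩ cylSet Z m n B) = P (cylSet Z 0 m A) * P (cylSet Z m n B) := by
  have hI : Indep (⨆ i ∈ {i : ℕ | i < m}, MeasurableSpace.comap (Z i) inferInstance)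
      (⨆ i ∈ {i : ℕ | i < m}ᶜ, MeasurableSpace.comap (Z i) inferInstance) P :=
    indep_biSup_compl (fun i => (hmeas i).comap_le)
      ((iIndepFun_iff_iIndep _ _ _).mp hindep) _
  refine (Indep_iff _ _ _).mp hI _ _ ?_ ?_
  · exact cyl_measurable_biSup _ 0 m (fun k => by simpa using k.isLt) A
  · exact cyl_measurable_biSup _ m n (fun k => by simp) B


/-! ### Partial sums of tuples -/

def psum {d : ℕ} {n : ℕ} (a : Fin n → Fin d → ℤ) (k : ℕ) : Fin d → ℤ :=
  ∑ i : Fin n, if (i : ℕ) < k then a i else 0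

lemma psum_tuple (m n k : ℕ) (hk : k ≤ n) (ω : Ω) :
    psum (fun i : Fin n => Z (m + i) ω) k = ∑ i ∈ Finset.Ico m (m + k), Z i ω := by
  have h1 : psum (fun i : Fin n => Z (m + i) ω) k
      = ∑ i ∈ Finset.range n, (if i < k then Z (m + i) ω else 0) :=
    Fin.sum_univ_eq_sum_range (fun i => if i < k then Z (m + i) ω else 0) n
  have h2 : (Finset.range n).filter (fun i => i < k) = Finset.range k := by
    ext i
    simp only [Finset.mem_filter, Finset.mem_range]
    omega
  rw [h1, ← Finset.sum_filter, h2, Finset.sum_Ico_eq_sum_range]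
  simp

lemma psum_all {n : ℕ} (a : Fin n → Fin d → ℤ) : psum a n = ∑ i, a i := by
  unfold psum
  exact Finset.sum_congr rfl fun i _ => if_pos i.isLt

/-! ### The walk events -/

def sz (d n : ℕ) : Set (Fin n → Fin d → ℤ) := {a | ∑ i, a i = 0}

def FA (d k : ℕ) : Set (Fin k → Fin d → ℤ) :=
  {a | ∑ i, a i = 0 ∧ ∀ j, 1 ≤ j → j < k → psum a j ≠ 0}

def HA (d K : ℕ) : Set (Fin K → Fin d → ℤ) := {a | ∃ k, 1 ≤ k ∧ k ≤ K ∧ psum a k = 0}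

def Hit (Z : ℕ → Ω → (Fin d → ℤ)) (m : ℕ) : Set Ω :=
  {ω | ∃ n, 1 ≤ n ∧ ∑ i ∈ Finset.Ico m (m + n), Z i ω = 0}

noncomputable def pp (P : Measure Ω) (Z : ℕ → Ω → (Fin d → ℤ)) (n : ℕ) : ℝ≥0∞ :=
  P (cylSet Z 0 n (sz d n))

noncomputable def fret (P : Measure Ω) (Z : ℕ → Ω → (Fin d → ℤ)) (k : ℕ) : ℝ≥0∞ :=
  P (cylSet Z 0 k (FA d k))

lemma cyl_sz_eq (m n : ℕ) :
    cylSet Z m n (sz d n) = {ω | ∑ i ∈ Finset.Ico m (m + n), Z i ω = 0} := by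
  ext ω
  simp only [cylSet, Set.mem_preimage, sz, Set.mem_setOf_eq]
  rw [← psum_all, psum_tuple m n n le_rfl]

lemma cyl_sz_zero_eq (n : ℕ) (x : Fin d → ℤ) :
    cylSet Z 0 n {a | ∑ i, a i = x} = {ω | ∑ i ∈ Finset.range n, Z i ω = x} := by
  ext ω
  simp only [cylSet, Set.mem_preimage, Set.mem_setOf_eq]
  have : ∑ i : Fin n, Z (0 + i) ω = ∑ i ∈ Finset.range n, Z i ω := by
    rw [Fin.sum_univ_eq_sum_range (fun i => Z (0 + i) ω) n]
    exact Finset.sum_congr rfl fun i _ => by rw [Nat.zero_add]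
  rw [this]

lemma pp_eq (n : ℕ) : pp P Z n = P {ω | ∑ i ∈ Finset.range n, Z i ω = 0} := by
  rw [pp, cyl_sz_eq]
  congr 1
  ext ω
  rw [Nat.zero_add, ← Finset.range_eq_Ico]

lemma pp_zero : pp P Z 0 = 1 := by
  rw [pp_eq]
  have : {ω : Ω | ∑ i ∈ Finset.range 0, Z i ω = 0} = Set.univ := by ext ω; simp
  rw [this, measure_univ]

lemma pp_le_one (n : ℕ) : pp P Z n ≤ 1 := prob_le_one

lemma cyl_FA_eq (k : ℕ) :
    cylSet Z 0 k (FA d k) = {ω | ∑ i ∈ Finset.range k, Z i ω = 0 ∧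
      ∀ j, 1 ≤ j → j < k → ∑ i ∈ Finset.range j, Z i ω ≠ 0} := by
  ext ω
  simp only [cylSet, Set.mem_preimage, FA, Set.mem_setOf_eq]
  have hall : ∑ i : Fin k, Z (0 + i) ω = ∑ i ∈ Finset.range k, Z i ω := by
    rw [Fin.sum_univ_eq_sum_range (fun i => Z (0 + i) ω) k]
    exact Finset.sum_congr rfl fun i _ => by rw [Nat.zero_add]
  have hp : ∀ j, j ≤ k → psum (fun i : Fin k => Z (0 + i) ω) j
      = ∑ i ∈ Finset.range j, Z i ω := by
    intro j hj
    rw [psum_tuple 0 k j hj]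
    apply Finset.sum_congr _ fun i _ => rfl
    rw [Nat.zero_add, ← Finset.range_eq_Ico]
  constructor
  · rintro ⟨h1, h2⟩
    refine ⟨by rwa [hall] at h1, fun j hj1 hjk => ?_⟩
    have := h2 j hj1 hjk
    rwa [hp j (le_of_lt hjk)] at this
  · rintro ⟨h1, h2⟩
    refine ⟨by rwa [hall], fun j hj1 hjk => ?_⟩
    rw [hp j (le_of_lt hjk)]
    exact h2 j hj1 hjk

lemma cyl_HA_eq (m K : ℕ) :
    cylSet Z m K (HA d K)
      = {ω | ∃ k, 1 ≤ k ∧ k ≤ K ∧ ∑ i ∈ Finset.Ico m (m + k), Z i ω = 0} := by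
  ext ω
  simp only [cylSet, Set.mem_preimage, HA, Set.mem_setOf_eq]
  constructor
  · rintro ⟨k, h1, h2, h3⟩
    exact ⟨k, h1, h2, by rwa [psum_tuple m K k h2] at h3⟩
  · rintro ⟨k, h1, h2, h3⟩
    exact ⟨k, h1, h2, by rwa [psum_tuple m K k h2]⟩

lemma Hit_eq_iUnion (m : ℕ) : Hit Z m = ⋃ K, cylSet Z m K (HA d K) := by
  ext ω
  simp only [Hit, Set.mem_setOf_eq, Set.mem_iUnion, cyl_HA_eq]
  constructor
  · rintro ⟨n, h1, h2⟩
    exact ⟨n, n, h1, le_rfl, h2⟩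
  · rintro ⟨K, k, h1, _, h3⟩
    exact ⟨k, h1, h3⟩

lemma meas_Hit_eq (hmeas : ∀ i, Measurable (Z i))
    (hval : ∀ i ω, ∃ j : Fin d, Z i ω = Pi.single j 1 ∨ Z i ω = -Pi.single j 1)
    (hunif : ∀ i (j : Fin d),
      P {ω | Z i ω = Pi.single j 1} = 1 / (2 * (d : ENNReal)) ∧
      P {ω | Z i ω = -Pi.single j 1} = 1 / (2 * (d : ENNReal)))
    (hindep : iIndepFun Z P)
    (m : ℕ) : P (Hit Z m) = P (Hit Z 0) := by
  have hdir : ∀ m : ℕ, Directed (fun x1 x2 : Set Ω => x1 ⊆ x2)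
      (fun K => cylSet Z m K (HA d K)) := by
    intro m
    have hmono : Monotone (fun K => cylSet Z m K (HA d K)) := by
      intro K K' hKK'
      show cylSet Z m K (HA d K) ⊆ cylSet Z m K' (HA d K')
      rw [cyl_HA_eq, cyl_HA_eq]
      rintro ω ⟨k, h1, h2, h3⟩
      exact ⟨k, h1, le_trans h2 hKK', h3⟩
    exact hmono.directed_le
  have h1 : P (Hit Z m) = ⨆ K, P (cylSet Z m K (HA d K)) := by
    rw [Hit_eq_iUnion]; exact (hdir m).measure_iUnion
  have h0 : P (Hit Z 0) = ⨆ K, P (cylSet Z 0 K (HA d K)) := by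
    rw [Hit_eq_iUnion]; exact (hdir 0).measure_iUnion
  rw [h1, h0]
  exact iSup_congr fun K => meas_cylSet_shift hmeas hval hunif hindep m 0 K _

lemma measurableSet_Hit (hmeas : ∀ i, Measurable (Z i)) (m : ℕ) :
    MeasurableSet (Hit Z m) := by
  rw [Hit_eq_iUnion]
  exact MeasurableSet.iUnion fun K => measurableSet_cylSet hmeas _ _ _


/-! ### The renewal identity -/

lemma renewal_decomp (N : ℕ) (hN : 1 ≤ N) :
    {ω | ∑ i ∈ Finset.range N, Z i ω = 0}
      = ⋃ k ∈ Finset.Icc 1 N, (cylSet Z 0 k (FA d k) ∩ cylSet Z k (N - k) (sz d (N - k))) := by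
  have hsz : ∀ k, k ≤ N → cylSet Z k (N - k) (sz d (N - k))
      = {ω | ∑ i ∈ Finset.Ico k N, Z i ω = 0} := by
    intro k hk
    rw [cyl_sz_eq]
    have : k + (N - k) = N := by omega
    rw [this]
  ext ω
  simp only [Set.mem_setOf_eq, Set.mem_iUnion, Finset.mem_Icc, cyl_FA_eq]
  constructor
  · intro h
    have hQ : ∃ j, 1 ≤ j ∧ ∑ i ∈ Finset.range j, Z i ω = 0 := ⟨N, hN, h⟩
    set k := Nat.find hQ with hkdef
    have hspec := Nat.find_spec hQ
    have hkN : k ≤ N := Nat.find_min' hQ ⟨hN, h⟩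
    refine ⟨k, ⟨hspec.1, hkN⟩, ⟨⟨hspec.2, fun j hj1 hjk => ?_⟩, ?_⟩⟩
    · intro hj0
      exact Nat.find_min hQ hjk ⟨hj1, hj0⟩
    · rw [hsz k hkN]
      show ∑ i ∈ Finset.Ico k N, Z i ω = 0
      have hcons := Finset.sum_Ico_consecutive (fun i => Z i ω) (Nat.zero_le k) hkN
      simp only [← Finset.range_eq_Ico] at hcons
      rw [hspec.2, zero_add] at hcons
      rw [hcons]
      exact h
  · rintro ⟨k, ⟨hk1, hkN⟩, ⟨⟨hsum, _⟩, hh⟩⟩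
    rw [hsz k hkN] at hh
    have hcons := Finset.sum_Ico_consecutive (fun i => Z i ω) (Nat.zero_le k) hkN
    simp only [← Finset.range_eq_Ico] at hcons
    rw [← hcons, hsum, hh, add_zero]

lemma renewal_disjoint (N : ℕ) :
    (↑(Finset.Icc 1 N) : Set ℕ).PairwiseDisjoint
      (fun k => cylSet Z 0 k (FA d k) ∩ cylSet Z k (N - k) (sz d (N - k))) := by
  have key : ∀ k k', k < k' → ∀ ω,
      ω ∈ cylSet Z 0 k (FA d k) → 1 ≤ k → ω ∉ cylSet Z 0 k' (FA d k') := by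
    intro k k' hkk' ω hk hk1 hk'
    rw [cyl_FA_eq] at hk hk'
    exact hk'.2 k hk1 hkk' hk.1
  intro k hk k' hk' hne
  simp only [Finset.coe_Icc, Set.mem_Icc] at hk hk'
  rw [Function.onFun, Set.disjoint_left]
  rintro ω ⟨h1, _⟩ ⟨h2, _⟩
  rcases lt_or_gt_of_ne hne with h | h
  · exact key k k' h ω h1 hk.1 h2
  · exact key k' k h ω h2 hk'.1 h1

lemma renewal_identity (hmeas : ∀ i, Measurable (Z i))
    (hval : ∀ i ω, ∃ j : Fin d, Z i ω = Pi.single j 1 ∨ Z i ω = -Pi.single j 1)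
    (hunif : ∀ i (j : Fin d),
      P {ω | Z i ω = Pi.single j 1} = 1 / (2 * (d : ENNReal)) ∧
      P {ω | Z i ω = -Pi.single j 1} = 1 / (2 * (d : ENNReal)))
    (hindep : iIndepFun Z P)
    (N : ℕ) (hN : 1 ≤ N) :
    pp P Z N = ∑ k ∈ Finset.Icc 1 N, fret P Z k * pp P Z (N - k) := by
  rw [pp_eq, renewal_decomp N hN,
    measure_biUnion_finset (renewal_disjoint N) (fun k _ =>
      ((measurableSet_cylSet hmeas _ _ _).inter (measurableSet_cylSet hmeas _ _ _)))]
  refine Finset.sum_congr rfl fun k _ => ?_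
  rw [indep_cyl hmeas hindep, fret, pp,
    meas_cylSet_shift hmeas hval hunif hindep k 0 (N - k)]

lemma fret_sum_le (hmeas : ∀ i, Measurable (Z i)) (M : ℕ) :
    ∑ k ∈ Finset.Icc 1 M, fret P Z k ≤ P (Hit Z 0) := by
  have hsub : ⋃ k ∈ Finset.Icc 1 M, cylSet Z 0 k (FA d k) ⊆ Hit Z 0 := by
    intro ω hω
    simp only [Set.mem_iUnion, Finset.mem_Icc] at hω
    obtain ⟨k, ⟨hk1, _⟩, hk⟩ := hω
    rw [cyl_FA_eq] at hk
    refine ⟨k, hk1, ?_⟩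
    rw [Nat.zero_add, ← Finset.range_eq_Ico]
    exact hk.1
  have hdisj : (↑(Finset.Icc 1 M) : Set ℕ).PairwiseDisjoint
      (fun k => cylSet Z 0 k (FA d k)) := by
    intro k hk k' hk' hne
    simp only [Finset.coe_Icc, Set.mem_Icc] at hk hk'
    rw [Function.onFun, Set.disjoint_left]
    intro ω h1 h2
    rcases lt_or_gt_of_ne hne with h | h
    · rw [cyl_FA_eq] at h1 h2
      exact h2.2 k hk.1 h h1.1
    · rw [cyl_FA_eq] at h1 h2
      exact h1.2 k' hk'.1 h h2.1
  calc ∑ k ∈ Finset.Icc 1 M, fret P Z k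
      = P (⋃ k ∈ Finset.Icc 1 M, cylSet Z 0 k (FA d k)) :=
        (measure_biUnion_finset hdisj (fun k _ => measurableSet_cylSet hmeas _ _ _)).symm
    _ ≤ P (Hit Z 0) := measure_mono hsub

/-- elementary double sum swap -/
lemma sum_swap_tri (F : ℕ → ℕ → ℝ≥0∞) (M : ℕ) :
    ∑ n ∈ Finset.range M, ∑ k ∈ Finset.range (n + 1), F k n
      = ∑ k ∈ Finset.range M, ∑ n ∈ Finset.Ico k M, F k n := by
  induction M with
  | zero => simp
  | succ M ih =>
    have h1 : ∀ k ∈ Finset.range M, ∑ n ∈ Finset.Ico k (M + 1), F k n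
        = ∑ n ∈ Finset.Ico k M, F k n + F k M := by
      intro k hk
      rw [Finset.sum_Ico_succ_top (le_of_lt (Finset.mem_range.mp hk))]
    have h2 : ∑ n ∈ Finset.Ico M (M + 1), F M n = F M M := by
      rw [Finset.sum_Ico_succ_top le_rfl, Finset.Ico_self, Finset.sum_empty, zero_add]
    have hr : ∑ k ∈ Finset.range (M + 1), ∑ n ∈ Finset.Ico k (M + 1), F k n
        = ∑ k ∈ Finset.range M, ∑ n ∈ Finset.Ico k M, F k n
          + (∑ k ∈ Finset.range M, F k M + F M M) := by
      rw [Finset.sum_range_succ, Finset.sum_congr rfl h1, Finset.sum_add_distrib, h2]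
      ring
    rw [Finset.sum_range_succ, ih, hr, Finset.sum_range_succ]

lemma hit_prob_one (hmeas : ∀ i, Measurable (Z i))
    (hval : ∀ i ω, ∃ j : Fin d, Z i ω = Pi.single j 1 ∨ Z i ω = -Pi.single j 1)
    (hunif : ∀ i (j : Fin d),
      P {ω | Z i ω = Pi.single j 1} = 1 / (2 * (d : ENNReal)) ∧
      P {ω | Z i ω = -Pi.single j 1} = 1 / (2 * (d : ENNReal)))
    (hindep : iIndepFun Z P)
    (hdiv : ∑' n : ℕ, pp P Z (n + 1) = ⊤) :
    P (Hit Z 0) = 1 := by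
  by_contra hne
  set q := P (Hit Z 0) with hq
  have hq1 : q < 1 := lt_of_le_of_ne prob_le_one hne
  -- the partial sums
  set T : ℕ → ℝ≥0∞ := fun M => ∑ n ∈ Finset.range M, pp P Z (n + 1) with hT
  have hTfin : ∀ M, T M ≠ ⊤ := by
    intro M
    have : T M ≤ ∑ n ∈ Finset.range M, 1 :=
      Finset.sum_le_sum fun n _ => pp_le_one (n + 1)
    simp only [Finset.sum_const, Finset.card_range, smul_eq_mul, mul_one] at this
    exact ne_top_of_le_ne_top (by simp) this
  have hkey : ∀ M, T M ≤ q * (1 + T M) := by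
    intro M
    have hPP : ∀ n : ℕ, pp P Z (n + 1)
        = ∑ j ∈ Finset.range (n + 1), fret P Z (j + 1) * pp P Z (n - j) := by
      intro n
      rw [renewal_identity hmeas hval hunif hindep (n + 1) (by omega)]
      have h0 : Finset.Icc 1 (n + 1) = Finset.Ico 1 (n + 2) := by
        exact (Finset.Ico_add_one_right_eq_Icc 1 (n + 1)).symm
      rw [h0, Finset.sum_Ico_eq_sum_range]
      refine Finset.sum_congr rfl fun j _ => ?_
      have e1 : 1 + j = j + 1 := by omega
      have e2 : n + 1 - (1 + j) = n - j := by omega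
      rw [e2, e1]
    calc T M = ∑ n ∈ Finset.range M, ∑ j ∈ Finset.range (n + 1),
          fret P Z (j + 1) * pp P Z (n - j) := Finset.sum_congr rfl fun n _ => hPP n
      _ = ∑ j ∈ Finset.range M, ∑ n ∈ Finset.Ico j M, fret P Z (j + 1) * pp P Z (n - j) :=
          sum_swap_tri _ M
      _ = ∑ j ∈ Finset.range M, fret P Z (j + 1) * ∑ n ∈ Finset.Ico j M, pp P Z (n - j) := by
          refine Finset.sum_congr rfl fun j _ => ?_
          rw [Finset.mul_sum]
      _ ≤ ∑ j ∈ Finset.range M, fret P Z (j + 1) * (1 + T M) := by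
          refine Finset.sum_le_sum fun j _ => ?_
          refine mul_le_mul_right ?_ _
          rw [Finset.sum_Ico_eq_sum_range]
          have hsub : ∀ i ∈ Finset.range (M - j), pp P Z (j + i - j) = pp P Z i := by
            intro i _
            congr 1
            omega
          rw [Finset.sum_congr rfl hsub]
          calc ∑ i ∈ Finset.range (M - j), pp P Z i
              ≤ ∑ i ∈ Finset.range (M + 1), pp P Z i :=
                Finset.sum_le_sum_of_subset (Finset.range_subset_range.mpr (by omega))
            _ = 1 + T M := by
                rw [Finset.sum_range_succ']
                rw [pp_zero, hT, add_comm]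
      _ = (∑ j ∈ Finset.range M, fret P Z (j + 1)) * (1 + T M) := by
          rw [Finset.sum_mul]
      _ ≤ q * (1 + T M) := by
          refine mul_le_mul_left ?_ _
          have : ∑ j ∈ Finset.range M, fret P Z (j + 1) = ∑ k ∈ Finset.Icc 1 M, fret P Z k := by
            rw [show Finset.Icc 1 M = Finset.Ico 1 (M + 1) from (Finset.Ico_add_one_right_eq_Icc 1 M).symm,
              Finset.sum_Ico_eq_sum_range]
            refine Finset.sum_congr rfl fun j _ => ?_
            rw [show 1 + j = j + 1 from by omega]
          rw [this]
          exact fret_sum_le hmeas M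
  -- pass to the reals
  have hqr : q.toReal < 1 := by
    rw [← ENNReal.toReal_one]
    exact ENNReal.toReal_strict_mono (by simp) hq1
  set C : ℝ := q.toReal / (1 - q.toReal) with hC
  have hbound : ∀ M, (T M).toReal ≤ C := by
    intro M
    have h1 := hkey M
    have hfin : q * (1 + T M) ≠ ⊤ := by
      apply ENNReal.mul_ne_top (by finiteness)
      exact ENNReal.add_ne_top.mpr ⟨by simp, hTfin M⟩
    have h2 : (T M).toReal ≤ q.toReal * (1 + (T M).toReal) := by
      have := ENNReal.toReal_mono hfin h1
      rwa [ENNReal.toReal_mul, ENNReal.toReal_add (by simp) (hTfin M),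
        ENNReal.toReal_one] at this
    have ht0 : 0 ≤ (T M).toReal := ENNReal.toReal_nonneg
    rw [hC]
    rw [le_div_iff₀ (by linarith)]
    nlinarith
  have hC0 : 0 ≤ C := div_nonneg ENNReal.toReal_nonneg (by linarith)
  have : ∑' n : ℕ, pp P Z (n + 1) ≤ ENNReal.ofReal C := by
    rw [ENNReal.tsum_eq_iSup_nat]
    refine iSup_le fun M => ?_
    exact (ENNReal.le_ofReal_iff_toReal_le (hTfin M) hC0).mpr (hbound M)
  rw [hdiv] at this
  simp at this


/-! ### `pp (n+n)` as a sum of squares -/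

lemma cyl_sum_eq (m n : ℕ) (x : Fin d → ℤ) :
    cylSet Z m n {a | ∑ i, a i = x} = {ω | ∑ i ∈ Finset.Ico m (m + n), Z i ω = x} := by
  ext ω
  simp only [cylSet, Set.mem_preimage, Set.mem_setOf_eq]
  rw [← psum_all, psum_tuple m n n le_rfl]

lemma meas_sum_neg (hmeas : ∀ i, Measurable (Z i))
    (hval : ∀ i ω, ∃ j : Fin d, Z i ω = Pi.single j 1 ∨ Z i ω = -Pi.single j 1)
    (hunif : ∀ i (j : Fin d),
      P {ω | Z i ω = Pi.single j 1} = 1 / (2 * (d : ENNReal)) ∧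
      P {ω | Z i ω = -Pi.single j 1} = 1 / (2 * (d : ENNReal)))
    (hindep : iIndepFun Z P)
    (n : ℕ) (x : Fin d → ℤ) :
    P {ω | ∑ i ∈ Finset.range n, Z i ω = -x} = P {ω | ∑ i ∈ Finset.range n, Z i ω = x} := by
  rw [← cyl_sz_zero_eq, ← cyl_sz_zero_eq]
  have hset : {a : Fin n → Fin d → ℤ | ∑ i, a i = -x} = {a | -a ∈ {a | ∑ i, a i = x}} := by
    ext a
    simp only [Set.mem_setOf_eq, Pi.neg_apply, Finset.sum_neg_distrib]
    exact ⟨fun h => by rw [h, neg_neg], fun h => by rw [← h, neg_neg]⟩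
  rw [hset]
  exact meas_cylSet_neg hmeas hval hunif hindep 0 n _

lemma pp_square_sum (hmeas : ∀ i, Measurable (Z i))
    (hval : ∀ i ω, ∃ j : Fin d, Z i ω = Pi.single j 1 ∨ Z i ω = -Pi.single j 1)
    (hunif : ∀ i (j : Fin d),
      P {ω | Z i ω = Pi.single j 1} = 1 / (2 * (d : ENNReal)) ∧
      P {ω | Z i ω = -Pi.single j 1} = 1 / (2 * (d : ENNReal)))
    (hindep : iIndepFun Z P)
    (n : ℕ) :
    pp P Z (n + n)
      = ∑' x : (Fin d → ℤ), P {ω | ∑ i ∈ Finset.range n, Z i ω = x} ^ 2 := by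
  have hdecomp : {ω | ∑ i ∈ Finset.range (n + n), Z i ω = 0}
      = ⋃ x : (Fin d → ℤ),
        (cylSet Z 0 n {a | ∑ i, a i = x} ∩ cylSet Z n n {a | ∑ i, a i = -x}) := by
    ext ω
    have hcons : ∑ i ∈ Finset.range n, Z i ω + ∑ i ∈ Finset.Ico n (n + n), Z i ω
        = ∑ i ∈ Finset.range (n + n), Z i ω := by
      have h0 := Finset.sum_Ico_consecutive (fun i => Z i ω) (Nat.zero_le n)
        (by omega : n ≤ n + n)
      simpa [← Finset.range_eq_Ico] using h0
    have hc2 : ∀ x : Fin d → ℤ, cylSet Z n n {a | ∑ i, a i = -x}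
        = {ω | ∑ i ∈ Finset.Ico n (n + n), Z i ω = -x} := fun x => cyl_sum_eq n n (-x)
    simp only [Set.mem_setOf_eq, Set.mem_iUnion, Set.mem_inter_iff, cyl_sz_zero_eq, hc2]
    constructor
    · intro h
      exact ⟨∑ i ∈ Finset.range n, Z i ω, rfl, eq_neg_of_add_eq_zero_left
        (by rw [add_comm]; exact hcons.trans h)⟩
    · rintro ⟨x, h1, h2⟩
      rw [← hcons, h1, h2]
      abel
  have hdisj : Pairwise (Function.onFun Disjoint (fun x : (Fin d → ℤ) =>
      cylSet Z 0 n {a | ∑ i, a i = x} ∩ cylSet Z n n {a | ∑ i, a i = -x})) := by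
    intro x x' hxx'
    rw [Function.onFun, Set.disjoint_left]
    rintro ω ⟨h1, _⟩ ⟨h2, _⟩
    rw [cyl_sz_zero_eq] at h1 h2
    exact hxx' (h1.symm.trans h2)
  rw [pp_eq, hdecomp, measure_iUnion hdisj (fun x =>
    (measurableSet_cylSet hmeas _ _ _).inter (measurableSet_cylSet hmeas _ _ _))]
  refine tsum_congr fun x => ?_
  rw [indep_cyl hmeas hindep, meas_cylSet_shift hmeas hval hunif hindep n 0 n,
    cyl_sz_zero_eq, cyl_sz_zero_eq, meas_sum_neg hmeas hval hunif hindep, sq]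


/-! ### Second moment estimates -/

noncomputable def fc (Z : ℕ → Ω → (Fin d → ℤ)) (i : ℕ) (j : Fin d) : Ω → ℝ :=
  fun ω => ((Z i ω j : ℤ) : ℝ)

lemma meas_fc (hmeas : ∀ i, Measurable (Z i)) (i : ℕ) (j : Fin d) :
    Measurable (fc Z i j) :=
  (measurable_of_countable fun v : Fin d → ℤ => ((v j : ℤ) : ℝ)).comp (hmeas i)

lemma abs_fc_le (hval : ∀ i ω, ∃ j : Fin d, Z i ω = Pi.single j 1 ∨ Z i ω = -Pi.single j 1)
    (i : ℕ) (j : Fin d) (ω : Ω) : |fc Z i j ω| ≤ 1 := by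
  obtain ⟨j', hj' | hj'⟩ := hval i ω <;> rw [fc, hj'] <;>
    simp only [Pi.neg_apply, Pi.single_apply, Int.cast_neg, abs_neg] <;>
    split_ifs <;> norm_num

lemma int_fc (hmeas : ∀ i, Measurable (Z i))
    (hval : ∀ i ω, ∃ j : Fin d, Z i ω = Pi.single j 1 ∨ Z i ω = -Pi.single j 1)
    (i : ℕ) (j : Fin d) : Integrable (fc Z i j) P :=
  (integrable_const (1 : ℝ)).mono' (meas_fc hmeas i j).aestronglyMeasurable
    (ae_of_all _ fun ω => by simpa using abs_fc_le hval i j ω)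

lemma int_fc_mul (hmeas : ∀ i, Measurable (Z i))
    (hval : ∀ i ω, ∃ j : Fin d, Z i ω = Pi.single j 1 ∨ Z i ω = -Pi.single j 1)
    (i i' : ℕ) (j : Fin d) : Integrable (fun ω => fc Z i j ω * fc Z i' j ω) P := by
  refine (integrable_const (1 : ℝ)).mono'
    ((meas_fc hmeas i j).mul (meas_fc hmeas i' j)).aestronglyMeasurable
    (ae_of_all _ fun ω => ?_)
  rw [Real.norm_eq_abs, abs_mul]
  exact mul_le_one₀ (abs_fc_le hval i j ω) (abs_nonneg _) (abs_fc_le hval i' j ω)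

lemma integral_fc (hmeas : ∀ i, Measurable (Z i))
    (hval : ∀ i ω, ∃ j : Fin d, Z i ω = Pi.single j 1 ∨ Z i ω = -Pi.single j 1)
    (hunif : ∀ i (j : Fin d),
      P {ω | Z i ω = Pi.single j 1} = 1 / (2 * (d : ENNReal)) ∧
      P {ω | Z i ω = -Pi.single j 1} = 1 / (2 * (d : ENNReal)))
    (i : ℕ) (j : Fin d) : ∫ ω, fc Z i j ω ∂P = 0 := by
  set A : Set Ω := Z i ⁻¹' {Pi.single j 1} with hA
  set B : Set Ω := Z i ⁻¹' {-Pi.single j 1} with hB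
  have hApre : A = {ω | Z i ω = Pi.single j 1} := by ext ω; simp [hA]
  have hBpre : B = {ω | Z i ω = -Pi.single j 1} := by ext ω; simp [hB]
  have hABne : (Pi.single j 1 : Fin d → ℤ) ≠ -Pi.single j 1 := by
    intro h
    have := congrFun h j
    simp [Pi.single_apply] at this
  have hpt : fc Z i j = fun ω => Set.indicator A (fun _ => (1 : ℝ)) ω
      + Set.indicator B (fun _ => (-1 : ℝ)) ω := by
    funext ω
    by_cases h1 : Z i ω = Pi.single j 1
    · have h2 : ω ∉ B := by
        rw [hBpre]
        simp only [Set.mem_setOf_eq]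
        rw [h1]
        exact hABne
      have h1' : ω ∈ A := by rw [hApre]; exact h1
      rw [Set.indicator_of_mem h1', Set.indicator_of_notMem h2, fc, h1]
      simp [Pi.single_apply]
    · by_cases h2 : Z i ω = -Pi.single j 1
      · have h2' : ω ∈ B := by rw [hBpre]; exact h2
        have h1' : ω ∉ A := by rw [hApre]; exact h1
        rw [Set.indicator_of_notMem h1', Set.indicator_of_mem h2', fc, h2]
        simp [Pi.single_apply]
      · have h1' : ω ∉ A := by rw [hApre]; exact h1
        have h2' : ω ∉ B := by rw [hBpre]; exact h2
        rw [Set.indicator_of_notMem h1', Set.indicator_of_notMem h2', fc]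
        obtain ⟨j', hj' | hj'⟩ := hval i ω
        · have hjj' : j ≠ j' := by
            intro h
            exact h1 (by rw [hj', h])
          rw [hj']
          simp [Pi.single_apply, hjj']
        · have hjj' : j ≠ j' := by
            intro h
            exact h2 (by rw [hj', h])
          rw [hj']
          simp [Pi.single_apply, hjj']
  have hAmeas : MeasurableSet A := hmeas i (measurableSet_singleton _)
  have hBmeas : MeasurableSet B := hmeas i (measurableSet_singleton _)
  rw [hpt, integral_add ((integrable_const _).indicator hAmeas)
    ((integrable_const _).indicator hBmeas),
    integral_indicator_const _ hAmeas, integral_indicator_const _ hBmeas]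
  have hPA : P A = 1 / (2 * (d : ENNReal)) := by rw [hApre]; exact (hunif i j).1
  have hPB : P B = 1 / (2 * (d : ENNReal)) := by rw [hBpre]; exact (hunif i j).2
  rw [measureReal_def, measureReal_def, hPA, hPB, smul_eq_mul, smul_eq_mul]
  ring

lemma integral_fc_sq_le (hmeas : ∀ i, Measurable (Z i))
    (hval : ∀ i ω, ∃ j : Fin d, Z i ω = Pi.single j 1 ∨ Z i ω = -Pi.single j 1)
    (i : ℕ) (j : Fin d) : ∫ ω, fc Z i j ω * fc Z i j ω ∂P ≤ 1 := by
  have h1 : ∫ ω, (1 : ℝ) ∂P = 1 := by simp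
  rw [← h1]
  refine integral_mono (int_fc_mul hmeas hval i i j) (integrable_const _) fun ω => ?_
  have := abs_fc_le hval i j ω
  nlinarith [abs_nonneg (fc Z i j ω), sq_abs (fc Z i j ω)]

lemma integral_fc_cross (hmeas : ∀ i, Measurable (Z i))
    (hval : ∀ i ω, ∃ j : Fin d, Z i ω = Pi.single j 1 ∨ Z i ω = -Pi.single j 1)
    (hunif : ∀ i (j : Fin d),
      P {ω | Z i ω = Pi.single j 1} = 1 / (2 * (d : ENNReal)) ∧
      P {ω | Z i ω = -Pi.single j 1} = 1 / (2 * (d : ENNReal)))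
    (hindep : iIndepFun Z P)
    (i i' : ℕ) (hii' : i ≠ i') (j : Fin d) :
    ∫ ω, fc Z i j ω * fc Z i' j ω ∂P = 0 := by
  have hφ : Measurable (fun v : Fin d → ℤ => ((v j : ℤ) : ℝ)) := measurable_of_countable _
  have hIF0 : IndepFun ((fun v : Fin d → ℤ => ((v j : ℤ) : ℝ)) ∘ Z i)
      ((fun v : Fin d → ℤ => ((v j : ℤ) : ℝ)) ∘ Z i') P :=
    IndepFun.comp (hindep.indepFun hii') hφ hφ
  have hIF : IndepFun (fc Z i j) (fc Z i' j) P := hIF0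
  have := hIF.integral_mul_eq_mul_integral (int_fc hmeas hval i j).aestronglyMeasurable (int_fc hmeas hval i' j).aestronglyMeasurable
  have heq : ∫ ω, fc Z i j ω * fc Z i' j ω ∂P = ∫ ω, (fc Z i j * fc Z i' j) ω ∂P := rfl
  rw [heq, this, integral_fc hmeas hval hunif i j, zero_mul]

lemma integral_sq_sum_le (hmeas : ∀ i, Measurable (Z i))
    (hval : ∀ i ω, ∃ j : Fin d, Z i ω = Pi.single j 1 ∨ Z i ω = -Pi.single j 1)
    (hunif : ∀ i (j : Fin d),
      P {ω | Z i ω = Pi.single j 1} = 1 / (2 * (d : ENNReal)) ∧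
      P {ω | Z i ω = -Pi.single j 1} = 1 / (2 * (d : ENNReal)))
    (hindep : iIndepFun Z P)
    (n : ℕ) (j : Fin d) :
    ∫ ω, (∑ i ∈ Finset.range n, fc Z i j ω) ^ 2 ∂P ≤ (n : ℝ) := by
  have hpt : ∀ ω, (∑ i ∈ Finset.range n, fc Z i j ω) ^ 2
      = ∑ i ∈ Finset.range n, ∑ i' ∈ Finset.range n, fc Z i j ω * fc Z i' j ω := by
    intro ω
    rw [sq, Finset.sum_mul_sum]
  have hint : ∀ i ∈ Finset.range n, Integrable
      (fun ω => ∑ i' ∈ Finset.range n, fc Z i j ω * fc Z i' j ω) P :=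
    fun i _ => integrable_finset_sum _ fun i' _ => int_fc_mul hmeas hval i i' j
  calc ∫ ω, (∑ i ∈ Finset.range n, fc Z i j ω) ^ 2 ∂P
      = ∫ ω, ∑ i ∈ Finset.range n, ∑ i' ∈ Finset.range n, fc Z i j ω * fc Z i' j ω ∂P := by
        exact integral_congr_ae (ae_of_all _ hpt)
    _ = ∑ i ∈ Finset.range n, ∫ ω, ∑ i' ∈ Finset.range n,
          fc Z i j ω * fc Z i' j ω ∂P := integral_finset_sum _ hint
    _ = ∑ i ∈ Finset.range n, ∑ i' ∈ Finset.range n,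
          ∫ ω, fc Z i j ω * fc Z i' j ω ∂P := by
        refine Finset.sum_congr rfl fun i _ => ?_
        exact integral_finset_sum _ fun i' _ => int_fc_mul hmeas hval i i' j
    _ ≤ ∑ i ∈ Finset.range n, (1 : ℝ) := by
        refine Finset.sum_le_sum fun i hi => ?_
        have : ∑ i' ∈ Finset.range n, ∫ ω, fc Z i j ω * fc Z i' j ω ∂P
            = ∫ ω, fc Z i j ω * fc Z i j ω ∂P :=
          Finset.sum_eq_single_of_mem i hi fun i' _ hi' =>
            integral_fc_cross hmeas hval hunif hindep i i' (Ne.symm hi') j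
        rw [this]
        exact integral_fc_sq_le hmeas hval i j
    _ = (n : ℝ) := by simp


/-! ### Chebyshev and the Cauchy–Schwarz lower bound -/

lemma prob_bad_le (hmeas : ∀ i, Measurable (Z i))
    (hval : ∀ i ω, ∃ j : Fin d, Z i ω = Pi.single j 1 ∨ Z i ω = -Pi.single j 1)
    (hunif : ∀ i (j : Fin d),
      P {ω | Z i ω = Pi.single j 1} = 1 / (2 * (d : ENNReal)) ∧
      P {ω | Z i ω = -Pi.single j 1} = 1 / (2 * (d : ENNReal)))
    (hindep : iIndepFun Z P)
    (n K : ℕ) (hK : 0 < K) (j : Fin d) :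
    (P {ω | (K : ℝ) ≤ |∑ i ∈ Finset.range n, fc Z i j ω|}).toReal ≤ n / K ^ 2 := by
  set g : Ω → ℝ := fun ω => ∑ i ∈ Finset.range n, fc Z i j ω with hg
  have hgint : Integrable (fun ω => g ω ^ 2) P := by
    have : (fun ω => g ω ^ 2) = fun ω => ∑ i ∈ Finset.range n, ∑ i' ∈ Finset.range n,
        fc Z i j ω * fc Z i' j ω := by
      funext ω
      rw [hg, sq, Finset.sum_mul_sum]
    rw [this]
    exact integrable_finset_sum _ fun i _ =>
      integrable_finset_sum _ fun i' _ => int_fc_mul hmeas hval i i' j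
  have hmarkov := mul_meas_ge_le_integral_of_nonneg
    (ae_of_all P fun ω => sq_nonneg (g ω)) hgint ((K : ℝ) ^ 2)
  have hsub : {ω | (K : ℝ) ≤ |g ω|} ⊆ {ω | (K : ℝ) ^ 2 ≤ g ω ^ 2} := by
    intro ω hω
    simp only [Set.mem_setOf_eq] at hω ⊢
    have h2 := pow_le_pow_left₀ (by positivity : (0:ℝ) ≤ (K:ℝ)) hω 2
    rwa [sq_abs] at h2
  have hmono : (P {ω | (K : ℝ) ≤ |g ω|}).toReal ≤ (P {ω | (K : ℝ) ^ 2 ≤ g ω ^ 2}).toReal :=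
    ENNReal.toReal_mono (measure_ne_top _ _) (measure_mono hsub)
  have hK2 : (0 : ℝ) < (K : ℝ) ^ 2 := by positivity
  have hchain : (K : ℝ) ^ 2 * (P {ω | (K : ℝ) ^ 2 ≤ g ω ^ 2}).toReal ≤ (n : ℝ) :=
    le_trans hmarkov (integral_sq_sum_le hmeas hval hunif hindep n j)
  calc (P {ω | (K : ℝ) ≤ |g ω|}).toReal ≤ (P {ω | (K : ℝ) ^ 2 ≤ g ω ^ 2}).toReal := hmono
    _ ≤ (n : ℝ) / (K : ℝ) ^ 2 := by
        rw [le_div_iff₀ hK2]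
        linarith [hchain]
    _ = (n : ℝ) / (K : ℕ) ^ 2 := by push_cast; ring

lemma prob_good_ge_half (hmeas : ∀ i, Measurable (Z i))
    (hval : ∀ i ω, ∃ j : Fin d, Z i ω = Pi.single j 1 ∨ Z i ω = -Pi.single j 1)
    (hunif : ∀ i (j : Fin d),
      P {ω | Z i ω = Pi.single j 1} = 1 / (2 * (d : ENNReal)) ∧
      P {ω | Z i ω = -Pi.single j 1} = 1 / (2 * (d : ENNReal)))
    (hindep : iIndepFun Z P)
    (hd : d = 1 ∨ d = 2)
    (n : ℕ) (hn : 1 ≤ n) :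
    (1 : ℝ) / 2 ≤
      (P {ω | ∀ j : Fin d, |∑ i ∈ Finset.range n, fc Z i j ω|
        < (2 * (Nat.sqrt n + 1) : ℕ)}).toReal := by
  set K : ℕ := 2 * (Nat.sqrt n + 1) with hKdef
  have hK : 0 < K := by omega
  set good : Set Ω := {ω | ∀ j : Fin d, |∑ i ∈ Finset.range n, fc Z i j ω| < (K : ℝ)}
    with hgood
  have hgmeas : ∀ j : Fin d, Measurable (fun ω => ∑ i ∈ Finset.range n, fc Z i j ω) :=
    fun j => Finset.measurable_sum _ fun i _ => meas_fc hmeas i j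
  have hgoodmeas : MeasurableSet good := by
    rw [hgood]
    have : {ω : Ω | ∀ j : Fin d, |∑ i ∈ Finset.range n, fc Z i j ω| < (K : ℝ)}
        = ⋂ j : Fin d, {ω | |∑ i ∈ Finset.range n, fc Z i j ω| < (K : ℝ)} := by
      ext ω; simp [Set.mem_iInter]
    rw [this]
    exact MeasurableSet.iInter fun j =>
      measurableSet_lt (hgmeas j).abs measurable_const
  have hcompl : goodᶜ = ⋃ j : Fin d, {ω | (K : ℝ) ≤ |∑ i ∈ Finset.range n, fc Z i j ω|} := by
    rw [hgood]
    ext ω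
    simp [not_lt]
  have hcbound : (P goodᶜ).toReal ≤ (d : ℝ) * ((n : ℝ) / K ^ 2) := by
    have h1 : P goodᶜ ≤ ∑' j : Fin d, P {ω | (K : ℝ) ≤ |∑ i ∈ Finset.range n, fc Z i j ω|} := by
      rw [hcompl]
      exact measure_iUnion_le _
    rw [tsum_fintype] at h1
    have h2 : (P goodᶜ).toReal
        ≤ ∑ j : Fin d, (P {ω | (K : ℝ) ≤ |∑ i ∈ Finset.range n, fc Z i j ω|}).toReal := by
      refine le_trans (ENNReal.toReal_mono ?_ h1) ?_
      · exact ENNReal.sum_ne_top.mpr fun j _ => measure_ne_top _ _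
      · rw [ENNReal.toReal_sum fun j _ => measure_ne_top _ _]
    refine le_trans h2 ?_
    calc ∑ j : Fin d, (P {ω | (K : ℝ) ≤ |∑ i ∈ Finset.range n, fc Z i j ω|}).toReal
        ≤ ∑ _j : Fin d, (n : ℝ) / K ^ 2 :=
          Finset.sum_le_sum fun j _ => prob_bad_le hmeas hval hunif hindep n K hK j
      _ = (d : ℝ) * ((n : ℝ) / K ^ 2) := by
          rw [Finset.sum_const, Finset.card_univ, Fintype.card_fin, nsmul_eq_mul]
  have hhalf : (d : ℝ) * ((n : ℝ) / K ^ 2) ≤ 1 / 2 := by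
    have hd2 : (d : ℝ) ≤ 2 := by
      rcases hd with h | h <;> rw [h] <;> norm_num
    have hKsq : (4 : ℝ) * n ≤ (K : ℝ) ^ 2 := by
      have h1 : n < (Nat.sqrt n + 1) * (Nat.sqrt n + 1) := Nat.lt_succ_sqrt n
      have h1' : (n : ℝ) ≤ ((Nat.sqrt n + 1 : ℕ) : ℝ) * ((Nat.sqrt n + 1 : ℕ) : ℝ) := by
        exact_mod_cast le_of_lt h1
      have hKr : (K : ℝ) = 2 * ((Nat.sqrt n + 1 : ℕ) : ℝ) := by
        rw [hKdef]; push_cast; ring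
      rw [hKr]
      nlinarith
    have hn' : (0 : ℝ) < n := by exact_mod_cast hn
    have hK2 : (0 : ℝ) < (K : ℝ) ^ 2 := by positivity
    have h3 : (n : ℝ) / K ^ 2 ≤ 1 / 4 := by
      rw [div_le_div_iff₀ hK2 (by norm_num)]
      nlinarith
    have h4 : (0 : ℝ) ≤ (n : ℝ) / K ^ 2 := by positivity
    nlinarith
  have hPcompl : P goodᶜ = 1 - P good := prob_compl_eq_one_sub hgoodmeas
  have htr : (P goodᶜ).toReal = 1 - (P good).toReal := by
    rw [hPcompl, ENNReal.toReal_sub_of_le prob_le_one (by simp), ENNReal.toReal_one]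
  have := le_trans hcbound hhalf
  rw [htr] at this
  linarith

lemma pp_lower (hmeas : ∀ i, Measurable (Z i))
    (hval : ∀ i ω, ∃ j : Fin d, Z i ω = Pi.single j 1 ∨ Z i ω = -Pi.single j 1)
    (hunif : ∀ i (j : Fin d),
      P {ω | Z i ω = Pi.single j 1} = 1 / (2 * (d : ENNReal)) ∧
      P {ω | Z i ω = -Pi.single j 1} = 1 / (2 * (d : ENNReal)))
    (hindep : iIndepFun Z P)
    (hd : d = 1 ∨ d = 2) (n : ℕ) (hn : 1 ≤ n) :
    ENNReal.ofReal (1 / (400 * n)) ≤ pp P Z (n + n) := by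
  classical
  set K : ℕ := 2 * (Nat.sqrt n + 1) with hKdef
  set T : Finset (Fin d → ℤ) := Fintype.piFinset fun _ : Fin d => Finset.Icc (-(K : ℤ)) (K : ℤ)
    with hT
  -- cardinality bound
  have hcardIcc : (Finset.Icc (-(K : ℤ)) (K : ℤ)).card = 2 * K + 1 := by
    rw [Int.card_Icc]
    omega
  have hcard : T.card = (2 * K + 1) ^ d := by
    rw [hT, Fintype.card_piFinset]
    simp [hcardIcc]
  have hs1 : Nat.sqrt n * Nat.sqrt n ≤ n := Nat.sqrt_le n
  have hs2 : Nat.sqrt n ≤ n := Nat.sqrt_le_self n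
  have hcard_le : T.card ≤ 100 * n := by
    rw [hcard, hKdef]
    rcases hd with h | h <;> rw [h] <;> nlinarith [hs1, hs2, hn]
  -- coordinates
  have hcoord : ∀ (ω : Ω) (j : Fin d),
      (((∑ i ∈ Finset.range n, Z i ω) j : ℤ) : ℝ) = ∑ i ∈ Finset.range n, fc Z i j ω := by
    intro ω j
    rw [Finset.sum_apply]
    push_cast
    rfl
  set good : Set Ω := {ω | ∀ j : Fin d, |∑ i ∈ Finset.range n, fc Z i j ω| < (K : ℝ)}
    with hgood
  have hsubset : good ⊆ ⋃ x ∈ T, {ω | ∑ i ∈ Finset.range n, Z i ω = x} := by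
    intro ω hω
    simp only [Set.mem_iUnion]
    refine ⟨∑ i ∈ Finset.range n, Z i ω, ?_, rfl⟩
    rw [hT, Fintype.mem_piFinset]
    intro j
    rw [Finset.mem_Icc]
    have h1 : |∑ i ∈ Finset.range n, fc Z i j ω| < (K : ℝ) := hω j
    rw [← hcoord ω j] at h1
    have h2 : |(∑ i ∈ Finset.range n, Z i ω) j| < (K : ℤ) := by
      exact_mod_cast h1
    rw [abs_lt] at h2
    exact ⟨h2.1.le, h2.2.le⟩
  -- the half bound transported to the finite sum
  have hhalf := prob_good_ge_half hmeas hval hunif hindep hd n hn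
  have hP1 : P good ≤ ∑ x ∈ T, P {ω | ∑ i ∈ Finset.range n, Z i ω = x} :=
    le_trans (measure_mono hsubset) (measure_biUnion_finset_le T _)
  have h12 : (1 : ℝ) / 2 ≤ ∑ x ∈ T, (P {ω | ∑ i ∈ Finset.range n, Z i ω = x}).toReal := by
    refine le_trans hhalf ?_
    refine le_trans (ENNReal.toReal_mono ?_ hP1) ?_
    · exact ENNReal.sum_ne_top.mpr fun x _ => measure_ne_top _ _
    · rw [ENNReal.toReal_sum fun x _ => measure_ne_top _ _]
  -- Cauchy–Schwarz
  set r : (Fin d → ℤ) → ℝ := fun x => (P {ω | ∑ i ∈ Finset.range n, Z i ω = x}).toReal with hr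
  have hCS : (∑ x ∈ T, r x) ^ 2 ≤ (T.card : ℝ) * ∑ x ∈ T, r x ^ 2 :=
    sq_sum_le_card_mul_sum_sq
  have hrsq : (1 : ℝ) / (400 * n) ≤ ∑ x ∈ T, r x ^ 2 := by
    have h1 : (1 / 2 : ℝ) ^ 2 ≤ (∑ x ∈ T, r x) ^ 2 := by
      have h0 : (0 : ℝ) ≤ (1 : ℝ) / 2 := by norm_num
      exact pow_le_pow_left₀ h0 h12 2
    have hsumsq : (0 : ℝ) ≤ ∑ x ∈ T, r x ^ 2 :=
      Finset.sum_nonneg fun x _ => sq_nonneg _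
    have hcard' : (T.card : ℝ) ≤ 100 * n := by exact_mod_cast hcard_le
    have hn' : (0 : ℝ) < n := by exact_mod_cast hn
    have h2 : (1 / 2 : ℝ) ^ 2 ≤ (100 * n) * ∑ x ∈ T, r x ^ 2 := by
      calc (1 / 2 : ℝ) ^ 2 ≤ (T.card : ℝ) * ∑ x ∈ T, r x ^ 2 := le_trans h1 hCS
        _ ≤ (100 * n) * ∑ x ∈ T, r x ^ 2 := by
            exact mul_le_mul_of_nonneg_right hcard' hsumsq
    rw [div_le_iff₀ (by positivity)]
    nlinarith
  -- relate to pp (n+n)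
  have hsq_le : ∑ x ∈ T, P {ω | ∑ i ∈ Finset.range n, Z i ω = x} ^ 2 ≤ pp P Z (n + n) := by
    rw [pp_square_sum hmeas hval hunif hindep n]
    exact ENNReal.sum_le_tsum T
  have htor : ∑ x ∈ T, r x ^ 2
      = (∑ x ∈ T, P {ω | ∑ i ∈ Finset.range n, Z i ω = x} ^ 2).toReal := by
    rw [ENNReal.toReal_sum fun x _ => ENNReal.pow_ne_top (measure_ne_top _ _)]
    exact Finset.sum_congr rfl fun x _ => by rw [hr, ENNReal.toReal_pow]
  have hfinal : (1 : ℝ) / (400 * n) ≤ (pp P Z (n + n)).toReal := by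
    refine le_trans hrsq ?_
    rw [htor]
    exact ENNReal.toReal_mono (measure_ne_top _ _) hsq_le
  exact ENNReal.ofReal_le_of_le_toReal hfinal

lemma pp_divergence (hmeas : ∀ i, Measurable (Z i))
    (hval : ∀ i ω, ∃ j : Fin d, Z i ω = Pi.single j 1 ∨ Z i ω = -Pi.single j 1)
    (hunif : ∀ i (j : Fin d),
      P {ω | Z i ω = Pi.single j 1} = 1 / (2 * (d : ENNReal)) ∧
      P {ω | Z i ω = -Pi.single j 1} = 1 / (2 * (d : ENNReal)))
    (hindep : iIndepFun Z P)
    (hd : d = 1 ∨ d = 2) :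
    ∑' n : ℕ, pp P Z (n + 1) = ⊤ := by
  have hinj : Function.Injective (fun n : ℕ => 2 * n + 1) := fun a b h => by
    simp only at h
    omega
  have hle : ∑' n : ℕ, pp P Z ((2 * n + 1) + 1) ≤ ∑' m : ℕ, pp P Z (m + 1) :=
    ENNReal.tsum_comp_le_tsum_of_injective hinj (fun m => pp P Z (m + 1))
  have heq : ∀ n : ℕ, pp P Z ((2 * n + 1) + 1) = pp P Z ((n + 1) + (n + 1)) := by
    intro n
    congr 1
    omega
  have hlow : ∀ n : ℕ, ENNReal.ofReal (1 / (400 * (n + 1 : ℕ))) ≤ pp P Z ((2 * n + 1) + 1) := by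
    intro n
    rw [heq n]
    exact pp_lower hmeas hval hunif hindep hd (n + 1) (by omega)
  have hdiv : ∑' n : ℕ, ENNReal.ofReal (1 / (400 * (n + 1 : ℕ))) = ⊤ := by
    by_contra hne
    have hsum : Summable (fun n : ℕ => (ENNReal.ofReal (1 / (400 * (n + 1 : ℕ)))).toReal) :=
      ENNReal.summable_toReal hne
    have hsum2 : Summable (fun n : ℕ => 1 / (400 * ((n : ℝ) + 1))) := by
      refine hsum.congr fun n => ?_
      rw [ENNReal.toReal_ofReal (by positivity)]
      push_cast
      ring
    have hsum3 : Summable (fun n : ℕ => 1 / ((n : ℝ) + 1)) := by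
      have h400 : Summable (fun n : ℕ => 400 * (1 / (400 * ((n : ℝ) + 1)))) :=
        hsum2.mul_left 400
      refine h400.congr fun n => ?_
      field_simp
    have hsum4 : Summable (fun n : ℕ => 1 / (n : ℝ)) := by
      rw [← summable_nat_add_iff 1]
      refine hsum3.congr fun n => ?_
      push_cast
      ring
    exact Real.not_summable_one_div_natCast hsum4
  refine top_unique ?_
  calc ⊤ = ∑' n : ℕ, ENNReal.ofReal (1 / (400 * (n + 1 : ℕ))) := hdiv.symm
    _ ≤ ∑' n : ℕ, pp P Z ((2 * n + 1) + 1) := ENNReal.tsum_le_tsum hlow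
    _ ≤ ∑' m : ℕ, pp P Z (m + 1) := hle

end PolyaProof

open PolyaProof in
/-- **Pólya's theorem, recurrent case.** The simple random walk on `ℤ^d`
(steps i.i.d. uniform on the `2d` unit coordinate vectors `±e_j`) is recurrent
for `d = 1, 2`: almost surely it returns to the origin infinitely often. -/
theorem polya_recurrent
    {Ω : Type*} [MeasurableSpace Ω] (P : Measure Ω) [IsProbabilityMeasure P]
    (d : ℕ) (hd : d = 1 ∨ d = 2)
    (Z : ℕ → Ω → (Fin d → ℤ))
    (hmeas : ∀ i, Measurable (Z i))
    (hindep : iIndepFun Z P)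
    (hval : ∀ i ω, ∃ j : Fin d, Z i ω = Pi.single j 1 ∨ Z i ω = -Pi.single j 1)
    (hunif : ∀ i (j : Fin d),
      P {ω | Z i ω = Pi.single j 1} = 1 / (2 * (d : ENNReal)) ∧
      P {ω | Z i ω = -Pi.single j 1} = 1 / (2 * (d : ENNReal)))
    (X : ℕ → Ω → (Fin d → ℤ))
    (hX : ∀ n ω, X n ω = ∑ i ∈ Finset.range n, Z i ω) :
    ∀ᵐ ω ∂P, {n : ℕ | X n ω = 0}.Infinite := by
  have hq1 : ∀ m, P (Hit Z m) = 1 := by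
    intro m
    rw [meas_Hit_eq hmeas hval hunif hindep m]
    exact hit_prob_one hmeas hval hunif hindep (pp_divergence hmeas hval hunif hindep hd)
  have hae : ∀ᵐ ω ∂P, ∀ m : ℕ, ω ∈ Hit Z m := by
    rw [MeasureTheory.ae_all_iff]
    intro m
    have hcompl : P (Hit Z m)ᶜ = 0 := by
      rw [prob_compl_eq_one_sub (measurableSet_Hit hmeas m), hq1 m, tsub_self]
    exact MeasureTheory.mem_ae_iff.mpr hcompl
  filter_upwards [hae] with ω hω
  have hzero : ∀ m, X m ω = 0 → ∃ m', m < m' ∧ X m' ω = 0 := by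
    intro m hm
    obtain ⟨n, hn1, hn2⟩ := hω m
    refine ⟨m + n, by omega, ?_⟩
    rw [hX]
    have hcons : ∑ i ∈ Finset.range m, Z i ω + ∑ i ∈ Finset.Ico m (m + n), Z i ω
        = ∑ i ∈ Finset.range (m + n), Z i ω := by
      have h0 := Finset.sum_Ico_consecutive (fun i => Z i ω) (Nat.zero_le m)
        (by omega : m ≤ m + n)
      simpa [← Finset.range_eq_Ico] using h0
    rw [← hcons, hn2, add_zero]
    rw [hX m ω] at hm
    exact hm
  have h0 : X 0 ω = 0 := by rw [hX]; simp
  have hlarge : ∀ k, ∃ m, k ≤ m ∧ X m ω = 0 := by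
    intro k
    induction k with
    | zero => exact ⟨0, le_rfl, h0⟩
    | succ k ih =>
      obtain ⟨m, hkm, hm⟩ := ih
      obtain ⟨m', hmm', hm'⟩ := hzero m hm
      exact ⟨m', by omega, hm'⟩
  by_contra hfin
  rw [Set.not_infinite] at hfin
  obtain ⟨b, hb⟩ := hfin.bddAbove
  obtain ⟨m, hbm, hm⟩ := hlarge (b + 1)
  have hcontra : m ≤ b := hb hm
  omega
end

section
/- (Annealed mean duration of a left excursion) Consider a uniformly elliptic i.i.d. random environment (p_x)_{x∈ℤ} with E(ln ρ_0) < 0, so that the walk is transient to +∞. Let τ_1 = inf{n ≥ 0 : X_n = 1} and define the quenched mean excursion duration ω_1 = 1 + E^ω_0(τ_1), the quenched expected duration of a left excursion from site 1. Then: if E(ρ_0) < 1 one has E(ω_1) = 2/(1 - E(ρ_0)), and if E(ρ_0) ≥ 1 one has E(ω_1) = ∞. -/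
open MeasureTheory ProbabilityTheory Filter

/-- One-step transition probability of the nearest-neighbour walk in the
environment `pω`. -/
noncomputable def rwreStep (pω : ℤ → ℝ) (x y : ℤ) : ℝ :=
  if y = x + 1 then pω x else if y = x - 1 then 1 - pω x else 0

/-- The hitting time of site `x` by the path `f`, as an extended nonnegative
real (equal to `∞` if the site is never visited). -/
noncomputable def rwreHitTime (x : ℤ) (f : ℕ → ℤ) : ENNReal :=
  ⨅ (n : ℕ) (_ : f n = x), (n : ENNReal)

namespace RWREProof

noncomputable def stepE (w : ℤ → ℝ) (a b : ℤ) : ENNReal := ENNReal.ofReal (rwreStep w a b)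

/-- weight of the path starting at `x` and then visiting `γ 0, γ 1, ...`. -/
noncomputable def W (w : ℤ → ℝ) : (n : ℕ) → ℤ → (Fin n → ℤ) → ENNReal
  | 0, _, _ => 1
  | (n+1), x, γ => stepE w x (γ 0) * W w n (γ 0) (Fin.tail γ)

/-- total weight of `n`-step paths from `x` avoiding site `1` (incl. start). -/
noncomputable def pathT (w : ℤ → ℝ) (n : ℕ) (x : ℤ) : ENNReal :=
  ∑' γ : Fin n → ℤ, if x ≠ 1 ∧ ∀ i, γ i ≠ 1 then W w n x γ else 0

lemma rwreStep_nonneg {w : ℤ → ℝ} (hw : ∀ x, w x ∈ Set.Ioo (0:ℝ) 1) (a b : ℤ) :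
    0 ≤ rwreStep w a b := by
  unfold rwreStep
  split_ifs
  · exact (hw a).1.le
  · linarith [(hw a).2]
  · exact le_refl _

lemma W_full (w : ℤ → ℝ) (n : ℕ) (g : ℕ → ℤ) :
    (∏ i ∈ Finset.range n, stepE w (g i) (g (i+1)))
      = W w n (g 0) (fun i : Fin n => g (i + 1)) := by
  induction n generalizing g with
  | zero => simp [W]
  | succ n ih =>
    rw [Finset.prod_range_succ']
    have h1 : (∏ i ∈ Finset.range n, stepE w (g (i+1)) (g (i+1+1)))
        = W w n (g 1) (fun i : Fin n => g (i + 1 + 1)) := ih (fun i => g (i+1))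
    rw [h1, W, mul_comm]
    have h0 : ((0 : Fin (n+1)) : ℕ) = 0 := rfl
    rw [h0]
    rfl

lemma pathT_zero (w : ℤ → ℝ) (x : ℤ) : pathT w 0 x = if x = 1 then 0 else 1 := by
  unfold pathT
  rw [tsum_eq_single (fun i => (1:ℤ))]
  · by_cases hx : x = 1 <;> simp [hx, W]
  · intro γ hγ
    exact absurd (funext fun i => i.elim0) hγ

lemma tsum_fiber {α β : Type*} [DecidableEq β] (c : α → β) (f : α → ENNReal) :
    ∑' a, f a = ∑' (b : β) (a : α), (if c a = b then f a else 0) := by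
  rw [ENNReal.tsum_comm]
  congr 1
  funext a
  rw [tsum_eq_single (c a)]
  · simp
  · intro b' hb
    rw [if_neg (fun h => hb h.symm)]

lemma pathT_succ {w : ℤ → ℝ} (n : ℕ) (x : ℤ) :
    pathT w (n+1) x = if x = 1 then 0 else
      ENNReal.ofReal (w x) * pathT w n (x+1) + ENNReal.ofReal (1 - w x) * pathT w n (x-1) := by
  have key : pathT w (n+1) x
      = ∑' z : ℤ, (if x = 1 then 0 else stepE w x z * pathT w n z) := by
    unfold pathT
    rw [← Equiv.tsum_eq (Fin.consEquiv (fun _ : Fin (n+1) => ℤ))]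
    have : ∀ c : ℤ × (Fin n → ℤ),
        (if x ≠ 1 ∧ ∀ (i : Fin (n + 1)), (Fin.consEquiv fun _ => ℤ) c i ≠ 1 then
          W w (n + 1) x ((Fin.consEquiv fun _ => ℤ) c) else 0)
        = (if x = 1 then 0 else stepE w x c.1 *
            (if c.1 ≠ 1 ∧ ∀ i, c.2 i ≠ 1 then W w n c.1 c.2 else 0)) := by
      rintro ⟨z, γ⟩
      have hc : (Fin.consEquiv fun _ : Fin (n+1) => ℤ) (z, γ) = Fin.cons (α := fun _ : Fin (n+1) => ℤ) z γ := rfl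
      rw [hc]
      have hcond : (∀ (i : Fin (n + 1)), Fin.cons (α := fun _ : Fin (n+1) => ℤ) z γ i ≠ 1) ↔ (z ≠ 1 ∧ ∀ i, γ i ≠ 1) := by
        rw [Fin.forall_fin_succ]
        simp [Fin.cons_zero, Fin.cons_succ]
      have hW : W w (n+1) x (Fin.cons (α := fun _ : Fin (n+1) => ℤ) z γ) = stepE w x z * W w n z γ := by
        rw [W]
        simp [Fin.cons_zero, Fin.tail_cons]
      by_cases hx : x = 1 <;> by_cases hz : (z ≠ 1 ∧ ∀ i, γ i ≠ 1) <;>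
        simp [hx, hcond, hz, hW, mul_ite]
    simp_rw [this]
    rw [ENNReal.tsum_prod']
    congr 1
    funext z
    by_cases hx : x = 1
    · simp [hx]
    · simp only [hx, if_false]
      rw [ENNReal.tsum_mul_left]
  rw [key]
  by_cases hx : x = 1
  · simp [hx]
  · simp only [hx, if_false]
    rw [tsum_eq_sum (s := ({x+1, x-1} : Finset ℤ))
      (by
        intro z hz
        simp only [Finset.mem_insert, Finset.mem_singleton] at hz
        push_neg at hz
        have : rwreStep w x z = 0 := by
          unfold rwreStep
          rw [if_neg hz.1, if_neg hz.2]
        simp [stepE, this])]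
    rw [Finset.sum_pair (by omega)]
    have h1 : stepE w x (x+1) = ENNReal.ofReal (w x) := by
      simp [stepE, rwreStep]
    have h2 : stepE w x (x-1) = ENNReal.ofReal (1 - w x) := by
      have : rwreStep w x (x-1) = 1 - w x := by
        unfold rwreStep
        rw [if_neg (by omega), if_pos rfl]
      simp [stepE, this]
    rw [h1, h2]

noncomputable def SE (w : ℤ → ℝ) (x : ℤ) : ENNReal := ∑' n : ℕ, pathT w n x

noncomputable def PE (w : ℤ → ℝ) (x : ℤ) : ENNReal := ENNReal.ofReal (w x)
noncomputable def QE (w : ℤ → ℝ) (x : ℤ) : ENNReal := ENNReal.ofReal (1 - w x)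
noncomputable def rE (w : ℤ → ℝ) (x : ℤ) : ENNReal := ENNReal.ofReal ((1 - w x) / w x)

variable {w : ℤ → ℝ}

lemma pathT_one (n : ℕ) : pathT w n 1 = 0 := by
  unfold pathT
  simp

lemma pathT_succ' (n : ℕ) {x : ℤ} (hx : x ≠ 1) :
    pathT w (n+1) x = PE w x * pathT w n (x+1) + QE w x * pathT w n (x-1) := by
  rw [pathT_succ, if_neg hx]
  rfl

lemma PQ_sum (hw : ∀ x, w x ∈ Set.Ioo (0:ℝ) 1) (x : ℤ) : PE w x + QE w x = 1 := by
  unfold PE QE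
  rw [← ENNReal.ofReal_add (hw x).1.le (by linarith [(hw x).2])]
  norm_num

lemma SE_one : SE w 1 = 0 := by
  unfold SE
  simp [pathT_one]

lemma SE_eq {x : ℤ} (hx : x ≠ 1) :
    SE w x = 1 + PE w x * SE w (x+1) + QE w x * SE w (x-1) := by
  unfold SE
  rw [tsum_eq_zero_add' ENNReal.summable]
  simp_rw [pathT_succ' _ hx, pathT_zero, if_neg hx]
  rw [ENNReal.tsum_add, ENNReal.tsum_mul_left, ENNReal.tsum_mul_left]
  ring

lemma pathT_mono (hw : ∀ x, w x ∈ Set.Ioo (0:ℝ) 1) (n : ℕ) :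
    ∀ y : ℤ, y ≤ 0 → pathT w n (y+1) ≤ pathT w n (y-1) := by
  induction n with
  | zero =>
    intro y hy
    rw [pathT_zero, pathT_zero]
    split_ifs <;> first | omega | simp
  | succ n ih =>
    intro y hy
    by_cases hy1 : y + 1 = 1
    · have : y = 0 := by omega
      subst this
      rw [show (0:ℤ) + 1 = 1 from rfl, pathT_one]
      exact zero_le
    · rw [pathT_succ' _ hy1, pathT_succ' _ (show y - 1 ≠ 1 by omega)]
      rw [show y+1+1 = y+2 by ring, show y+1-1 = y by ring,
          show y-1+1 = y by ring, show y-1-1 = y-2 by ring]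
      have h1 : pathT w n (y+2) ≤ pathT w n y := by
        have h := ih (y+1) (by omega)
        rwa [show y+1+1 = y+2 by ring, show y+1-1 = y by ring] at h
      have h3 : pathT w n y ≤ pathT w n (y-2) := by
        have h := ih (y-1) (by omega)
        rwa [show y-1+1 = y by ring, show y-1-1 = y-2 by ring] at h
      calc PE w (y+1) * pathT w n (y+2) + QE w (y+1) * pathT w n y
          ≤ PE w (y+1) * pathT w n y + QE w (y+1) * pathT w n y := by gcongr
        _ = (PE w (y+1) + QE w (y+1)) * pathT w n y := by ring
        _ = pathT w n y := by rw [PQ_sum hw, one_mul]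
        _ = (PE w (y-1) + QE w (y-1)) * pathT w n y := by rw [PQ_sum hw, one_mul]
        _ = PE w (y-1) * pathT w n y + QE w (y-1) * pathT w n y := by ring
        _ ≤ PE w (y-1) * pathT w n y + QE w (y-1) * pathT w n (y-2) := by gcongr

lemma pathT_step_mono (hw : ∀ x, w x ∈ Set.Ioo (0:ℝ) 1) (n : ℕ) {x : ℤ} (hx : x ≤ 0) :
    pathT w n (x+1) ≤ pathT w (n+1) x := by
  rw [pathT_succ' _ (by omega)]
  calc pathT w n (x+1) = (PE w x + QE w x) * pathT w n (x+1) := by rw [PQ_sum hw, one_mul]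
    _ = PE w x * pathT w n (x+1) + QE w x * pathT w n (x+1) := by ring
    _ ≤ PE w x * pathT w n (x+1) + QE w x * pathT w n (x-1) := by
        gcongr
        exact pathT_mono hw n x hx

lemma SE_step_mono (hw : ∀ x, w x ∈ Set.Ioo (0:ℝ) 1) {x : ℤ} (hx : x ≤ 0) :
    1 + SE w (x+1) ≤ SE w x := by
  unfold SE
  rw [tsum_eq_zero_add' (f := fun n => pathT w n x) ENNReal.summable]
  rw [pathT_zero, if_neg (by omega)]
  gcongr with n
  exact pathT_step_mono hw n hx

noncomputable def estar (w : ℤ → ℝ) (x : ℤ) : ENNReal :=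
  ∑' k : ℕ, (∏ j ∈ Finset.range k, rE w (x - j)) * (PE w (x - k))⁻¹

noncomputable def Estar (w : ℤ → ℝ) (x : ℤ) : ENNReal :=
  ∑ i ∈ Finset.range (1 - x).toNat, estar w (x + i)

lemma PE_pos (hw : ∀ x, w x ∈ Set.Ioo (0:ℝ) 1) (x : ℤ) : PE w x ≠ 0 := by
  simp [PE, ENNReal.ofReal_eq_zero, not_le, (hw x).1]

lemma PE_ne_top (x : ℤ) : PE w x ≠ ⊤ := ENNReal.ofReal_ne_top

lemma PE_mul_rE (hw : ∀ x, w x ∈ Set.Ioo (0:ℝ) 1) (x : ℤ) : PE w x * rE w x = QE w x := by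
  unfold PE rE QE
  rw [← ENNReal.ofReal_mul (hw x).1.le]
  congr 1
  rw [mul_div_assoc']
  exact mul_div_cancel_left₀ _ (ne_of_gt (hw x).1)

lemma one_le_PE_inv (hw : ∀ x, w x ∈ Set.Ioo (0:ℝ) 1) (x : ℤ) : 1 ≤ (PE w x)⁻¹ := by
  have hle : PE w x ≤ 1 := by
    calc PE w x ≤ ENNReal.ofReal 1 := ENNReal.ofReal_le_ofReal (hw x).2.le
      _ = 1 := ENNReal.ofReal_one
  simpa using ENNReal.inv_le_inv.mpr hle

lemma estar_rec (x : ℤ) : estar w x = (PE w x)⁻¹ + rE w x * estar w (x-1) := by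
  unfold estar
  rw [tsum_eq_zero_add' ENNReal.summable]
  congr 1
  · simp
  · rw [← ENNReal.tsum_mul_left]
    congr 1
    funext k
    rw [Finset.prod_range_succ']
    have h1 : ∀ j : ℕ, x - (↑(j+1) : ℤ) = x - 1 - j := by intro j; push_cast; ring
    have h2 : (x : ℤ) - (↑(k+1) : ℤ) = x - 1 - k := by push_cast; ring
    have h3 : ∏ j ∈ Finset.range k, rE w (x - ↑(j+1)) = ∏ j ∈ Finset.range k, rE w (x-1-j) :=
      Finset.prod_congr rfl (fun j _ => by rw [h1 j])
    rw [h2, h3]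
    have h4 : x - (0:ℕ) = x := by norm_num
    rw [h4]
    ring

lemma estar_eq (hw : ∀ x, w x ∈ Set.Ioo (0:ℝ) 1) (x : ℤ) :
    estar w x = 1 + QE w x * estar w (x-1) + QE w x * estar w x := by
  have h1 : PE w x * estar w x = 1 + QE w x * estar w (x-1) := by
    rw [estar_rec (w := w) x, mul_add, ENNReal.mul_inv_cancel (PE_pos hw x) (PE_ne_top x),
        ← mul_assoc, PE_mul_rE hw]
  calc estar w x = (PE w x + QE w x) * estar w x := by rw [PQ_sum hw, one_mul]
    _ = PE w x * estar w x + QE w x * estar w x := by ring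
    _ = 1 + QE w x * estar w (x-1) + QE w x * estar w x := by rw [h1]

lemma Estar_one : Estar w 1 = 0 := by
  unfold Estar
  norm_num

lemma Estar_split {x : ℤ} (hx : x ≤ 0) : Estar w x = estar w x + Estar w (x+1) := by
  unfold Estar
  have hn : (1 - x).toNat = (1 - (x+1)).toNat + 1 := by omega
  rw [hn, Finset.sum_range_succ']
  have h1 : ∀ i : ℕ, x + (↑(i+1) : ℤ) = (x+1) + i := by intro i; push_cast; ring
  rw [Finset.sum_congr rfl (fun i _ => by rw [h1 i])]
  have h4 : x + (0:ℕ) = x := by norm_num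
  rw [h4]
  ring

lemma Estar_eq (hw : ∀ x, w x ∈ Set.Ioo (0:ℝ) 1) {x : ℤ} (hx : x ≤ 0) :
    Estar w x = 1 + PE w x * Estar w (x+1) + QE w x * Estar w (x-1) := by
  rw [Estar_split hx, Estar_split (show x - 1 ≤ 0 by omega),
      show x - 1 + 1 = x by ring, Estar_split hx]
  conv_lhs => rw [estar_eq hw x]
  have hPQ : PE w x + QE w x = 1 := PQ_sum hw x
  calc 1 + QE w x * estar w (x-1) + QE w x * estar w x + Estar w (x+1)
      = 1 + QE w x * estar w (x-1) + QE w x * estar w x + (PE w x + QE w x) * Estar w (x+1) := by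
        rw [hPQ, one_mul]
    _ = 1 + PE w x * Estar w (x+1) + QE w x * (estar w (x-1) + (estar w x + Estar w (x+1))) := by
        ring

lemma sum_pathT_le (hw : ∀ x, w x ∈ Set.Ioo (0:ℝ) 1) (N : ℕ) :
    ∀ x : ℤ, x ≤ 1 → ∑ n ∈ Finset.range (N+1), pathT w n x ≤ Estar w x := by
  induction N with
  | zero =>
    intro x hx
    rw [Finset.sum_range_one, pathT_zero]
    by_cases hx1 : x = 1
    · simp [hx1, Estar_one]
    · rw [if_neg hx1, Estar_split (by omega)]
      calc (1:ENNReal) ≤ (PE w x)⁻¹ := one_le_PE_inv hw x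
        _ ≤ estar w x := by
            have := ENNReal.le_tsum (f := fun k : ℕ =>
              (∏ j ∈ Finset.range k, rE w (x - j)) * (PE w (x - k))⁻¹) 0
            unfold estar
            simpa using this
        _ ≤ estar w x + Estar w (x+1) := le_self_add
  | succ N ih =>
    intro x hx
    by_cases hx1 : x = 1
    · subst hx1
      simp [pathT_one, Estar_one]
    · rw [Finset.sum_range_succ']
      have hrec : ∀ n : ℕ, pathT w (n+1) x = PE w x * pathT w n (x+1) + QE w x * pathT w n (x-1) :=
        fun n => pathT_succ' n hx1
      rw [Finset.sum_congr rfl (fun n _ => hrec n), Finset.sum_add_distrib,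
          ← Finset.mul_sum, ← Finset.mul_sum, pathT_zero, if_neg hx1]
      have h1 : ∑ n ∈ Finset.range (N+1), pathT w n (x+1) ≤ Estar w (x+1) := ih (x+1) (by omega)
      have h2 : ∑ n ∈ Finset.range (N+1), pathT w n (x-1) ≤ Estar w (x-1) := ih (x-1) (by omega)
      calc PE w x * ∑ n ∈ Finset.range (N+1), pathT w n (x+1)
            + QE w x * ∑ n ∈ Finset.range (N+1), pathT w n (x-1) + 1
          ≤ PE w x * Estar w (x+1) + QE w x * Estar w (x-1) + 1 := by gcongr
        _ = Estar w x := by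
            rw [show Estar w x = 1 + PE w x * Estar w (x+1) + QE w x * Estar w (x-1) from
              Estar_eq hw (show x ≤ 0 by omega)]
            ring

lemma SE_le_estar (hw : ∀ x, w x ∈ Set.Ioo (0:ℝ) 1) : SE w 0 ≤ estar w 0 := by
  have h0 : Estar w 0 = estar w 0 := by
    rw [Estar_split le_rfl, show (0:ℤ)+1 = 1 from rfl, Estar_one, add_zero]
  rw [← h0]
  unfold SE
  refine ENNReal.tsum_le_of_sum_range_le (fun n => ?_)
  cases n with
  | zero => simp
  | succ N => exact sum_pathT_le hw N 0 (by omega)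

lemma QE_pos (hw : ∀ x, w x ∈ Set.Ioo (0:ℝ) 1) (x : ℤ) : QE w x ≠ 0 := by
  simp only [QE, ne_eq, ENNReal.ofReal_eq_zero, not_le]
  linarith [(hw x).2]

lemma QE_ne_top (x : ℤ) : QE w x ≠ ⊤ := ENNReal.ofReal_ne_top

lemma SE_fin_all (hw : ∀ x, w x ∈ Set.Ioo (0:ℝ) 1) (h : SE w 0 ≠ ⊤) :
    ∀ x : ℤ, x ≤ 1 → SE w x ≠ ⊤ := by
  have key : ∀ k : ℕ, SE w (-(k:ℤ)) ≠ ⊤ := by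
    intro k
    induction k with
    | zero => simpa using h
    | succ k ihk =>
      have hx : -(k:ℤ) ≠ 1 := by omega
      have heq := SE_eq (w := w) hx
      have hle : QE w (-(k:ℤ)) * SE w (-(k:ℤ)-1) ≤ SE w (-(k:ℤ)) := by
        rw [heq]; exact le_add_self
      have hne : SE w (-(k:ℤ)-1) ≠ ⊤ := by
        intro htop
        rw [htop, ENNReal.mul_top (QE_pos hw _)] at hle
        exact ihk (top_le_iff.mp hle)
      have : -((k:ℤ)+1) = -(k:ℤ)-1 := by ring
      rw [show (-(↑(k+1):ℤ)) = -(k:ℤ)-1 by push_cast; ring]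
      exact hne
  intro x hx
  by_cases hx1 : x = 1
  · rw [hx1, SE_one]; exact ENNReal.zero_ne_top
  · have : x = -((-x).toNat : ℤ) := by omega
    rw [this]
    exact key _

lemma SE_toReal_eq (hw : ∀ x, w x ∈ Set.Ioo (0:ℝ) 1) (h : SE w 0 ≠ ⊤) {x : ℤ} (hx : x ≤ 0) :
    (SE w x).toReal = 1 + w x * (SE w (x+1)).toReal + (1 - w x) * (SE w (x-1)).toReal := by
  have hA : SE w (x+1) ≠ ⊤ := SE_fin_all hw h (x+1) (by omega)
  have hB : SE w (x-1) ≠ ⊤ := SE_fin_all hw h (x-1) (by omega)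
  rw [SE_eq (show x ≠ 1 by omega)]
  rw [ENNReal.toReal_add, ENNReal.toReal_add, ENNReal.toReal_mul, ENNReal.toReal_mul]
  · simp only [ENNReal.toReal_one, PE, QE]
    rw [ENNReal.toReal_ofReal (hw x).1.le, ENNReal.toReal_ofReal (by linarith [(hw x).2])]
  · exact ENNReal.one_ne_top
  · exact ENNReal.mul_ne_top (PE_ne_top x) hA
  · exact ENNReal.add_ne_top.mpr ⟨ENNReal.one_ne_top, ENNReal.mul_ne_top (PE_ne_top x) hA⟩
  · exact ENNReal.mul_ne_top (QE_ne_top x) hB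

lemma SE_toReal_gap (hw : ∀ x, w x ∈ Set.Ioo (0:ℝ) 1) (h : SE w 0 ≠ ⊤) {x : ℤ} (hx : x ≤ 0) :
    1 + (SE w (x+1)).toReal ≤ (SE w x).toReal := by
  have hx' : SE w x ≠ ⊤ := SE_fin_all hw h x (by omega)
  have hA : SE w (x+1) ≠ ⊤ := SE_fin_all hw h (x+1) (by omega)
  have := SE_step_mono hw hx
  have h2 := ENNReal.toReal_mono hx' this
  rwa [ENNReal.toReal_add ENNReal.one_ne_top hA, ENNReal.toReal_one] at h2

/-- real gap function -/
noncomputable def eR (w : ℤ → ℝ) (x : ℤ) : ℝ := (SE w x).toReal - (SE w (x+1)).toReal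

lemma eR_nonneg (hw : ∀ x, w x ∈ Set.Ioo (0:ℝ) 1) (h : SE w 0 ≠ ⊤) {x : ℤ} (hx : x ≤ 0) :
    1 ≤ eR w x := by
  have := SE_toReal_gap hw h hx
  unfold eR
  linarith

lemma eR_rec (hw : ∀ x, w x ∈ Set.Ioo (0:ℝ) 1) (h : SE w 0 ≠ ⊤) {x : ℤ} (hx : x ≤ 0) :
    eR w x = 1 / w x + (1 - w x) / w x * eR w (x-1) := by
  have heq := SE_toReal_eq hw h hx
  have hwx := (hw x).1
  have hkey : w x * eR w x = 1 + (1 - w x) * eR w (x-1) := by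
    unfold eR
    rw [show x - 1 + 1 = x by ring]
    nlinarith [heq]
  field_simp
  nlinarith [hkey]

noncomputable def rhoR (w : ℤ → ℝ) (z : ℤ) : ℝ := (1 - w z) / w z

lemma rhoR_nonneg (hw : ∀ x, w x ∈ Set.Ioo (0:ℝ) 1) (z : ℤ) : 0 ≤ rhoR w z :=
  div_nonneg (by linarith [(hw z).2]) (hw z).1.le

lemma eR_expansion (hw : ∀ x, w x ∈ Set.Ioo (0:ℝ) 1) (h : SE w 0 ≠ ⊤) (K : ℕ) :
    eR w 0 = (∑ k ∈ Finset.range K, (∏ j ∈ Finset.range k, rhoR w (-(j:ℤ))) * (1 / w (-(k:ℤ))))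
      + (∏ j ∈ Finset.range K, rhoR w (-(j:ℤ))) * eR w (-(K:ℤ)) := by
  induction K with
  | zero => simp
  | succ K ihK =>
    rw [ihK, Finset.sum_range_succ, Finset.prod_range_succ]
    have hrec := eR_rec hw h (x := -(K:ℤ)) (by omega)
    rw [show -(K:ℤ) - 1 = -(↑(K+1):ℤ) by push_cast; ring] at hrec
    rw [hrec, rhoR]
    ring

lemma eR_partial_le (hw : ∀ x, w x ∈ Set.Ioo (0:ℝ) 1) (h : SE w 0 ≠ ⊤) (K : ℕ) :
    (∑ k ∈ Finset.range K, (∏ j ∈ Finset.range k, rhoR w (-(j:ℤ))) * (1 / w (-(k:ℤ))))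
      ≤ eR w 0 := by
  rw [eR_expansion hw h K]
  have h1 : 0 ≤ (∏ j ∈ Finset.range K, rhoR w (-(j:ℤ))) * eR w (-(K:ℤ)) := by
    apply mul_nonneg
    · exact Finset.prod_nonneg (fun j _ => rhoR_nonneg hw _)
    · linarith [eR_nonneg hw h (x := -(K:ℤ)) (by omega)]
  linarith

lemma estar_term_eq (hw : ∀ x, w x ∈ Set.Ioo (0:ℝ) 1) (k : ℕ) :
    (∏ j ∈ Finset.range k, rE w ((0:ℤ) - j)) * (PE w ((0:ℤ) - k))⁻¹
      = ENNReal.ofReal ((∏ j ∈ Finset.range k, rhoR w (-(j:ℤ))) * (1 / w (-(k:ℤ)))) := by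
  have h1 : ∏ j ∈ Finset.range k, rE w ((0:ℤ) - j)
      = ENNReal.ofReal (∏ j ∈ Finset.range k, rhoR w (-(j:ℤ))) := by
    rw [ENNReal.ofReal_prod_of_nonneg (fun j _ => rhoR_nonneg hw _)]
    exact Finset.prod_congr rfl (fun j _ => by rw [rE, rhoR, zero_sub])
  have h2 : (PE w ((0:ℤ) - k))⁻¹ = ENNReal.ofReal (1 / w (-(k:ℤ))) := by
    rw [PE, one_div, ENNReal.ofReal_inv_of_pos (hw _).1, zero_sub]
  rw [h1, h2, ← ENNReal.ofReal_mul (Finset.prod_nonneg (fun j _ => rhoR_nonneg hw _))]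

lemma estar_le_SE (hw : ∀ x, w x ∈ Set.Ioo (0:ℝ) 1) (h : SE w 0 ≠ ⊤) :
    estar w 0 ≤ SE w 0 := by
  unfold estar
  have heq : ∀ k : ℕ, (∏ j ∈ Finset.range k, rE w ((0:ℤ) - j)) * (PE w ((0:ℤ) - k))⁻¹
      = ENNReal.ofReal ((∏ j ∈ Finset.range k, rhoR w (-(j:ℤ))) * (1 / w (-(k:ℤ)))) :=
    estar_term_eq hw
  simp_rw [heq]
  refine ENNReal.tsum_le_of_sum_range_le (fun n => ?_)
  rw [← ENNReal.ofReal_sum_of_nonneg (fun k _ => mul_nonneg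
    (Finset.prod_nonneg (fun j _ => rhoR_nonneg hw _)) (by have := (hw (-(k:ℤ))).1; positivity))]
  calc ENNReal.ofReal _ ≤ ENNReal.ofReal (eR w 0) :=
        ENNReal.ofReal_le_ofReal (eR_partial_le hw h n)
    _ ≤ SE w 0 := by
        unfold eR
        rw [show (0:ℤ)+1 = 1 from rfl, SE_one]
        simp only [ENNReal.toReal_zero, sub_zero]
        rw [ENNReal.ofReal_toReal h]

lemma SE_eq_estar (hw : ∀ x, w x ∈ Set.Ioo (0:ℝ) 1) : SE w 0 = estar w 0 := by
  by_cases h : SE w 0 = ⊤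
  · rw [h]
    exact (top_le_iff.mp (h ▸ SE_le_estar hw)).symm
  · exact le_antisymm (SE_le_estar hw) (estar_le_SE hw h)

lemma PE_inv_eq (hw : ∀ x, w x ∈ Set.Ioo (0:ℝ) 1) (z : ℤ) : (PE w z)⁻¹ = 1 + rE w z := by
  rw [PE, ← ENNReal.ofReal_inv_of_pos (hw z).1, rE,
    ← ENNReal.ofReal_one, ← ENNReal.ofReal_add (by norm_num)
      (div_nonneg (by linarith [(hw z).2]) (hw z).1.le)]
  rw [inv_eq_one_div]
  congr 1
  have h0 : w z ≠ 0 := (hw z).1.ne'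
  field_simp
  ring

lemma one_add_estar (hw : ∀ x, w x ∈ Set.Ioo (0:ℝ) 1) :
    1 + estar w 0 = 2 * ∑' k : ℕ, ∏ j ∈ Finset.range k, rE w (-(j:ℤ)) := by
  have hzs : ∀ j : ℕ, (0:ℤ) - j = -(j:ℤ) := fun j => by ring
  have h1 : estar w 0 = ∑' k : ℕ, ((∏ j ∈ Finset.range k, rE w (-(j:ℤ)))
      + ∏ j ∈ Finset.range (k+1), rE w (-(j:ℤ))) := by
    unfold estar
    congr 1
    funext k
    rw [PE_inv_eq hw, Finset.prod_range_succ, mul_add, mul_one, hzs k]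
    congr 1
    · exact Finset.prod_congr rfl (fun j _ => by rw [hzs j])
    · exact congrArg (· * rE w (-(k:ℤ))) (Finset.prod_congr rfl (fun j _ => by rw [hzs j]))
  rw [h1, ENNReal.tsum_add]
  have h2 : ∑' k : ℕ, ∏ j ∈ Finset.range k, rE w (-(j:ℤ))
      = 1 + ∑' k : ℕ, ∏ j ∈ Finset.range (k+1), rE w (-(j:ℤ)) := by
    rw [tsum_eq_zero_add' ENNReal.summable]
    simp
  calc 1 + ((∑' k : ℕ, ∏ j ∈ Finset.range k, rE w (-(j:ℤ)))
        + ∑' k : ℕ, ∏ j ∈ Finset.range (k+1), rE w (-(j:ℤ)))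
      = (∑' k : ℕ, ∏ j ∈ Finset.range k, rE w (-(j:ℤ)))
        + (1 + ∑' k : ℕ, ∏ j ∈ Finset.range (k+1), rE w (-(j:ℤ))) := by ring
    _ = 2 * ∑' k : ℕ, ∏ j ∈ Finset.range k, rE w (-(j:ℤ)) := by rw [← h2]; ring

/-- the event that the walk has not hit `1` up to time `n` -/
def An (n : ℕ) : Set (ℕ → ℤ) := {f | ∀ i ≤ n, f i ≠ 1}

lemma An_measurable (n : ℕ) : MeasurableSet (An n) := by
  have : An n = ⋂ (i : ℕ) (_ : i ≤ n), (fun f : ℕ → ℤ => f i) ⁻¹' ({1}ᶜ) := by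
    ext f; simp [An]
  rw [this]
  exact MeasurableSet.iInter (fun i => MeasurableSet.iInter (fun _ =>
    measurable_pi_apply i (measurableSet_singleton 1).compl))

lemma cyl_measurable (n : ℕ) (c : ℕ → ℤ) : MeasurableSet {f : ℕ → ℤ | ∀ i ≤ n, f i = c i} := by
  have : {f : ℕ → ℤ | ∀ i ≤ n, f i = c i}
      = ⋂ (i : ℕ) (_ : i ≤ n), (fun f : ℕ → ℤ => f i) ⁻¹' {c i} := by
    ext f; simp
  rw [this]
  exact MeasurableSet.iInter (fun i => MeasurableSet.iInter (fun _ =>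
    measurable_pi_apply i (measurableSet_singleton (c i))))

lemma hitTime_eq_tsum (f : ℕ → ℤ) :
    rwreHitTime 1 f = ∑' n : ℕ, (if ∀ i ≤ n, f i ≠ 1 then (1:ENNReal) else 0) := by
  by_cases hex : ∃ m, f m = 1
  · set m₀ := Nat.find hex with hm₀
    have hLHS : rwreHitTime 1 f = (m₀ : ENNReal) := by
      apply le_antisymm
      · apply iInf_le_of_le m₀
        exact iInf_le _ (Nat.find_spec hex)
      · refine le_iInf (fun n => le_iInf (fun hn => ?_))
        exact_mod_cast Nat.cast_le.mpr (Nat.find_min' hex hn)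
    have hcond : ∀ n : ℕ, (∀ i ≤ n, f i ≠ 1) ↔ n < m₀ := by
      intro n
      constructor
      · intro hall
        by_contra hlt
        push_neg at hlt
        exact hall m₀ hlt (Nat.find_spec hex)
      · intro hlt i hi
        exact Nat.find_min hex (lt_of_le_of_lt hi hlt)
    rw [hLHS]
    have : ∀ n : ℕ, (if ∀ i ≤ n, f i ≠ 1 then (1:ENNReal) else 0)
        = if n < m₀ then 1 else 0 := fun n => by rw [if_congr (hcond n) rfl rfl]
    rw [tsum_congr this, tsum_eq_sum (s := Finset.range m₀)
      (by intro n hn; rw [if_neg]; simpa using hn)]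
    rw [Finset.sum_ite_of_true (fun n hn => by simpa using hn)]
    simp
  · push_neg at hex
    have hLHS : rwreHitTime 1 f = ⊤ := by
      unfold rwreHitTime
      simp [hex]
    rw [hLHS]
    have : ∀ n : ℕ, (if ∀ i ≤ n, f i ≠ 1 then (1:ENNReal) else 0) = 1 := fun n => by
      rw [if_pos (fun i _ => hex i)]
    rw [tsum_congr this]
    exact (ENNReal.tsum_const_eq_top_of_ne_zero one_ne_zero).symm

lemma lintegral_hitTime_eq (μ : Measure (ℕ → ℤ)) :
    ∫⁻ f, rwreHitTime 1 f ∂μ = ∑' n : ℕ, μ (An n) := by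
  rw [lintegral_congr hitTime_eq_tsum]
  have heq : ∀ (n : ℕ) (f : ℕ → ℤ), (if ∀ i ≤ n, f i ≠ 1 then (1:ENNReal) else 0)
      = (An n).indicator (fun _ => 1) f := by
    intro n f
    classical
    rw [Set.indicator_apply]
    exact if_congr Iff.rfl rfl rfl
  calc ∫⁻ f, ∑' n : ℕ, (if ∀ i ≤ n, f i ≠ 1 then (1:ENNReal) else 0) ∂μ
      = ∫⁻ f, ∑' n : ℕ, (An n).indicator (fun _ => 1) f ∂μ := by
        congr 1; funext f; exact tsum_congr (fun n => heq n f)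
    _ = ∑' n : ℕ, ∫⁻ f, (An n).indicator (fun _ => 1) f ∂μ :=
        lintegral_tsum (fun n => (measurable_const.indicator (An_measurable n)).aemeasurable)
    _ = ∑' n : ℕ, μ (An n) := tsum_congr (fun n => lintegral_indicator_one (An_measurable n))

lemma measure_An (hw : ∀ x, w x ∈ Set.Ioo (0:ℝ) 1) (x : ℤ) (μ : Measure (ℕ → ℤ))
    (hcyl : ∀ (n : ℕ) (γ : ℕ → ℤ), μ {f | ∀ i ≤ n, f i = γ i}
      = ENNReal.ofReal ((if γ 0 = x then 1 else 0) *
          ∏ i ∈ Finset.range n, rwreStep w (γ i) (γ (i+1))))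
    (n : ℕ) : μ (An n) = pathT w n x := by
  classical
  set ext : (Fin (n+1) → ℤ) → ℕ → ℤ :=
    fun γ i => if h : i < n+1 then γ ⟨i, h⟩ else 0 with hext
  set C : (Fin (n+1) → ℤ) → Set (ℕ → ℤ) := fun γ => {f | ∀ i ≤ n, f i = ext γ i} with hC
  have hextval : ∀ (γ : Fin (n+1) → ℤ) (i : Fin (n+1)), ext γ i.val = γ i := by
    intro γ i
    rw [hext]
    simp only [i.isLt, dif_pos, Fin.eta]
  -- decomposition of the event
  have hA : An n = ⋃ (γ : {γ : Fin (n+1) → ℤ // ∀ i, γ i ≠ 1}), C γ.1 := by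
    ext f
    constructor
    · intro hf
      refine Set.mem_iUnion.mpr ⟨⟨fun i => f i.val, fun i => hf i.val (by omega)⟩, ?_⟩
      intro i hi
      rw [hext]
      simp only [show i < n+1 from by omega, dif_pos]
    · intro hf
      obtain ⟨γ, hγ⟩ := Set.mem_iUnion.mp hf
      intro i hi
      have := hγ i hi
      rw [this, hext]
      simp only [show i < n+1 by omega, dif_pos]
      exact γ.2 _
  have hdisj : Pairwise (Function.onFun Disjoint
      (fun γ : {γ : Fin (n+1) → ℤ // ∀ i, γ i ≠ 1} => C γ.1)) := by
    intro a b hab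
    rw [Function.onFun, Set.disjoint_left]
    intro f hfa hfb
    apply hab
    apply Subtype.ext
    funext i
    have h1 := hfa i.val (by omega)
    have h2 := hfb i.val (by omega)
    rw [← hextval a.1 i, ← hextval b.1 i, ← h1, ← h2]
  have hμA : μ (An n) = ∑' γ : {γ : Fin (n+1) → ℤ // ∀ i, γ i ≠ 1}, μ (C γ.1) := by
    rw [hA]
    exact measure_iUnion hdisj (fun γ => cyl_measurable n _)
  have hsub : (∑' γ : {γ : Fin (n+1) → ℤ // ∀ i, γ i ≠ 1}, μ (C γ.1))
      = ∑' γ : Fin (n+1) → ℤ,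
          Set.indicator {γ : Fin (n+1) → ℤ | ∀ i, γ i ≠ 1} (fun γ => μ (C γ)) γ :=
    tsum_subtype {γ : Fin (n+1) → ℤ | ∀ i, γ i ≠ 1} (fun γ => μ (C γ))
  rw [hμA, hsub]
  have hterm : ∀ γ : Fin (n+1) → ℤ,
      Set.indicator {γ : Fin (n+1) → ℤ | ∀ i, γ i ≠ 1} (fun γ => μ (C γ)) γ
      = if (∀ i, γ i ≠ 1) then μ (C γ) else 0 := by
    intro γ
    rw [Set.indicator_apply]
    exact if_congr Iff.rfl rfl rfl
  rw [tsum_congr hterm]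
  -- split off the first coordinate
  rw [← Equiv.tsum_eq (Fin.consEquiv (fun _ : Fin (n+1) => ℤ))
    (f := fun γ => if (∀ i, γ i ≠ 1) then μ (C γ) else 0), ENNReal.tsum_prod']
  -- value of the measure of a cylinder through cons z δ
  have hCval : ∀ (z : ℤ) (δ : Fin n → ℤ),
      μ (C (Fin.cons (α := fun _ : Fin (n+1) => ℤ) z δ))
      = ENNReal.ofReal ((if z = x then 1 else 0) *
          ∏ i ∈ Finset.range n, rwreStep w (ext (Fin.cons (α := fun _ : Fin (n+1) => ℤ) z δ) i)
            (ext (Fin.cons (α := fun _ : Fin (n+1) => ℤ) z δ) (i+1))) := by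
    intro z δ
    have h0 : ext (Fin.cons (α := fun _ : Fin (n+1) => ℤ) z δ) 0 = z := by
      rw [hext]
      simp only [show (0:ℕ) < n+1 from by omega, dif_pos]
      exact Fin.cons_zero _ _
    rw [hcyl n (ext (Fin.cons (α := fun _ : Fin (n+1) => ℤ) z δ)), h0]
  -- the inner sums vanish unless z = x
  rw [tsum_eq_single x (by
    intro z hz
    have : ∀ δ : Fin n → ℤ,
        (if (∀ i, (Fin.consEquiv (fun _ : Fin (n+1) => ℤ)) (z, δ) i ≠ 1) then
          μ (C ((Fin.consEquiv (fun _ : Fin (n+1) => ℤ)) (z, δ))) else 0) = 0 := by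
      intro δ
      have hc : (Fin.consEquiv (fun _ : Fin (n+1) => ℤ)) (z, δ)
          = Fin.cons (α := fun _ : Fin (n+1) => ℤ) z δ := rfl
      rw [hc, hCval z δ, if_neg hz]
      simp
    rw [tsum_congr this, tsum_zero])]
  -- now identify term by term with pathT
  unfold pathT
  congr 1
  funext δ
  have hc : (Fin.consEquiv (fun _ : Fin (n+1) => ℤ)) (x, δ)
      = Fin.cons (α := fun _ : Fin (n+1) => ℤ) x δ := rfl
  rw [hc, hCval x δ, if_pos rfl, one_mul]
  have hcond : (∀ i, Fin.cons (α := fun _ : Fin (n+1) => ℤ) x δ i ≠ 1)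
      ↔ (x ≠ 1 ∧ ∀ i, δ i ≠ 1) := by
    rw [Fin.forall_fin_succ]
    simp [Fin.cons_zero, Fin.cons_succ]
  have hWval : ENNReal.ofReal (∏ i ∈ Finset.range n,
        rwreStep w (ext (Fin.cons (α := fun _ : Fin (n+1) => ℤ) x δ) i)
          (ext (Fin.cons (α := fun _ : Fin (n+1) => ℤ) x δ) (i+1)))
      = W w n x δ := by
    set g : ℕ → ℤ := ext (Fin.cons (α := fun _ : Fin (n+1) => ℤ) x δ) with hg
    rw [ENNReal.ofReal_prod_of_nonneg (fun i _ => rwreStep_nonneg hw _ _)]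
    have : ∀ i ∈ Finset.range n, ENNReal.ofReal (rwreStep w (g i) (g (i+1)))
        = stepE w (g i) (g (i+1)) := fun i _ => rfl
    rw [Finset.prod_congr rfl this, W_full w n g]
    have hg0 : g 0 = x := by
      rw [hg, hext]
      simp only [show (0:ℕ) < n+1 from by omega, dif_pos]
      exact Fin.cons_zero _ _
    have hgi : (fun i : Fin n => g (↑i + 1)) = δ := by
      funext i
      rw [hg, hext]
      simp only [show (i:ℕ)+1 < n+1 from by omega, dif_pos]
      exact Fin.cons_succ (α := fun _ : Fin (n+1) => ℤ) x δ i
    rw [hg0, hgi]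
  rw [if_congr hcond rfl rfl, hWval]

/-- Quenched identity: the mean excursion duration equals `2 ∑ₖ ρ₀ρ₋₁⋯ρ₋ₖ₊₁`. -/
lemma quenched_identity (hw : ∀ x, w x ∈ Set.Ioo (0:ℝ) 1) (μ : Measure (ℕ → ℤ))
    (hcyl : ∀ (n : ℕ) (γ : ℕ → ℤ), μ {f | ∀ i ≤ n, f i = γ i}
      = ENNReal.ofReal ((if γ 0 = 0 then 1 else 0) *
          ∏ i ∈ Finset.range n, rwreStep w (γ i) (γ (i+1)))) :
    1 + ∫⁻ f, rwreHitTime 1 f ∂μ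
      = 2 * ∑' k : ℕ, ∏ j ∈ Finset.range k, rE w (-(j:ℤ)) := by
  rw [lintegral_hitTime_eq μ, tsum_congr (measure_An hw 0 μ hcyl)]
  rw [show (∑' n : ℕ, pathT w n 0) = SE w 0 from rfl]
  rw [SE_eq_estar hw, one_add_estar hw]

end RWREProof

/-- **Annealed mean duration of a left excursion.**
For a uniformly elliptic i.i.d. environment with `E (log ρ₀) < 0` (so the walk
is transient to `+∞`), let `ω₁ = 1 + E^ω₀(τ₁)` be the quenched mean duration
of a left excursion from site `1` (`τ₁` the hitting time of `1` from `0`).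
Then `E ω₁ = 2/(1 - E ρ₀)` if `E ρ₀ < 1`, and `E ω₁ = ∞` if `E ρ₀ ≥ 1`. -/
theorem rwre_annealed_left_excursion_duration
    {Ω : Type*} [MeasurableSpace Ω] (P : Measure Ω) [IsProbabilityMeasure P]
    (p : ℤ → Ω → ℝ)
    (hmeas : ∀ x, Measurable (p x))
    (hval : ∀ x ω, p x ω ∈ Set.Ioo (0 : ℝ) 1)
    (hindep : iIndepFun p P)
    (hident : ∀ x, IdentDistrib (p x) (p 0) P P)
    (hellip : ∃ δ > (0 : ℝ), ∀ᵐ ω ∂P, δ ≤ p 0 ω ∧ p 0 ω ≤ 1 - δ)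
    (Pq : Ω → ℤ → Measure (ℕ → ℤ))
    [∀ ω z, IsProbabilityMeasure (Pq ω z)]
    (hPq : ∀ (ω : Ω) (z : ℤ) (n : ℕ) (γ : ℕ → ℤ),
      Pq ω z {f | ∀ i ≤ n, f i = γ i} =
        ENNReal.ofReal ((if γ 0 = z then 1 else 0) *
          ∏ i ∈ Finset.range n, rwreStep (fun x => p x ω) (γ i) (γ (i + 1))))
    (hlog : ∫ ω, Real.log ((1 - p 0 ω) / p 0 ω) ∂P < 0)
    (Eρ : ℝ) (hEρ : Eρ = ∫ ω, (1 - p 0 ω) / p 0 ω ∂P)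
    (excursion : Ω → ENNReal)
    (hexc : ∀ ω, excursion ω = 1 + ∫⁻ f, rwreHitTime 1 f ∂(Pq ω 0)) :
    (Eρ < 1 → ∫⁻ ω, excursion ω ∂P = ENNReal.ofReal (2 / (1 - Eρ))) ∧
    (1 ≤ Eρ → ∫⁻ ω, excursion ω ∂P = ⊤) := by
  classical
  set ρfun : ℤ → Ω → ENNReal := fun z ω => ENNReal.ofReal ((1 - p z ω) / p z ω) with hρdef
  have hg : Measurable (fun t : ℝ => ENNReal.ofReal ((1 - t) / t)) :=
    ENNReal.measurable_ofReal.comp ((measurable_const.sub measurable_id).div measurable_id)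
  have hρmeas : ∀ z, Measurable (ρfun z) := fun z => hg.comp (hmeas z)
  have hρindep : iIndepFun ρfun P :=
    hindep.comp (fun _ => fun t : ℝ => ENNReal.ofReal ((1 - t) / t)) (fun _ => hg)
  have hρnn : ∀ ω, (0:ℝ) ≤ (1 - p 0 ω) / p 0 ω := fun ω =>
    div_nonneg (by linarith [(hval 0 ω).2]) (hval 0 ω).1.le
  have hint : Integrable (fun ω => (1 - p 0 ω) / p 0 ω) P := by
    obtain ⟨δ, hδpos, hδ⟩ := hellip
    refine Integrable.mono' (integrable_const ((1-δ)/δ))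
      ((measurable_const.sub (hmeas 0)).div (hmeas 0)).aestronglyMeasurable ?_
    filter_upwards [hδ] with ω hω
    have h1 := (hval 0 ω).1
    rw [Real.norm_eq_abs, abs_of_nonneg (hρnn ω)]
    exact div_le_div₀ (by linarith [hω.1, hω.2]) (by linarith [hω.1]) hδpos hω.1
  have hEρ0 : 0 ≤ Eρ := hEρ ▸ integral_nonneg hρnn
  have hlint0 : ∫⁻ ω, ρfun 0 ω ∂P = ENNReal.ofReal Eρ := by
    rw [hEρ, MeasureTheory.ofReal_integral_eq_lintegral_ofReal hint
      (Filter.Eventually.of_forall hρnn)]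
  have hlint : ∀ z : ℤ, ∫⁻ ω, ρfun z ω ∂P = ENNReal.ofReal Eρ := by
    intro z
    rw [← hlint0]
    exact ((hident z).comp hg).lintegral_eq
  have hprod : ∀ k : ℕ, ∫⁻ ω, ∏ j ∈ Finset.range k, ρfun (-(j:ℤ)) ω ∂P
      = (ENNReal.ofReal Eρ)^k := by
    intro k
    induction k with
    | zero => simp
    | succ k ih =>
      have hmeasprod : Measurable (fun ω => ∏ j ∈ Finset.range k, ρfun (-(j:ℤ)) ω) :=
        Finset.measurable_prod _ (fun j _ => hρmeas _)
      have hindep2 : IndepFun (fun ω => ∏ j ∈ Finset.range k, ρfun (-(j:ℤ)) ω)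
          (ρfun (-(k:ℤ))) P := by
        have hinj : Function.Injective (fun j : ℕ => -(j:ℤ)) := fun a b h => by
          simpa using h
        have hnot : -(k:ℤ) ∉ (Finset.range k).image (fun j : ℕ => -(j:ℤ)) := by
          simp only [Finset.mem_image, Finset.mem_range, not_exists]
          intro j
          rintro ⟨hj, hjk⟩
          omega
        have h := hρindep.indepFun_finsetProd_of_notMem hρmeas hnot
        have heq : (∏ z ∈ (Finset.range k).image (fun j : ℕ => -(j:ℤ)), ρfun z)
            = fun ω => ∏ j ∈ Finset.range k, ρfun (-(j:ℤ)) ω := by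
          funext ω
          rw [Finset.prod_apply, Finset.prod_image (fun a _ b _ h => hinj h)]
        rwa [heq] at h
      calc ∫⁻ ω, ∏ j ∈ Finset.range (k+1), ρfun (-(j:ℤ)) ω ∂P
          = ∫⁻ ω, (∏ j ∈ Finset.range k, ρfun (-(j:ℤ)) ω) * ρfun (-(k:ℤ)) ω ∂P := by
            apply lintegral_congr
            intro ω
            rw [Finset.prod_range_succ]
        _ = (∫⁻ ω, ∏ j ∈ Finset.range k, ρfun (-(j:ℤ)) ω ∂P) * ∫⁻ ω, ρfun (-(k:ℤ)) ω ∂P :=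
            lintegral_mul_eq_lintegral_mul_lintegral_of_indepFun'' hmeasprod.aemeasurable
              (hρmeas _).aemeasurable hindep2
        _ = (ENNReal.ofReal Eρ)^k * ENNReal.ofReal Eρ := by rw [ih, hlint]
        _ = (ENNReal.ofReal Eρ)^(k+1) := by rw [pow_succ]
  have hmain : ∫⁻ ω, excursion ω ∂P = 2 * ∑' k : ℕ, (ENNReal.ofReal Eρ)^k := by
    have hexc2 : ∀ ω, excursion ω
        = 2 * ∑' k : ℕ, ∏ j ∈ Finset.range k, ρfun (-(j:ℤ)) ω := by
      intro ω
      rw [hexc ω]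
      exact RWREProof.quenched_identity (w := fun z => p z ω) (fun z => hval z ω)
        (Pq ω 0) (hPq ω 0)
    calc ∫⁻ ω, excursion ω ∂P
        = ∫⁻ ω, 2 * ∑' k : ℕ, ∏ j ∈ Finset.range k, ρfun (-(j:ℤ)) ω ∂P :=
          lintegral_congr hexc2
      _ = 2 * ∫⁻ ω, ∑' k : ℕ, ∏ j ∈ Finset.range k, ρfun (-(j:ℤ)) ω ∂P :=
          lintegral_const_mul 2
            (Measurable.ennreal_tsum (fun k => Finset.measurable_prod _ (fun j _ => hρmeas _)))
      _ = 2 * ∑' k : ℕ, ∫⁻ ω, ∏ j ∈ Finset.range k, ρfun (-(j:ℤ)) ω ∂P := by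
          rw [lintegral_tsum
            (fun k => (Finset.measurable_prod _ (fun j _ => hρmeas _)).aemeasurable)]
      _ = 2 * ∑' k : ℕ, (ENNReal.ofReal Eρ)^k := by
          congr 1
          exact tsum_congr hprod
  constructor
  · intro hlt
    rw [hmain, ENNReal.tsum_geometric]
    have h1 : (1:ENNReal) - ENNReal.ofReal Eρ = ENNReal.ofReal (1 - Eρ) := by
      rw [ENNReal.ofReal_sub 1 hEρ0, ENNReal.ofReal_one]
    rw [h1, ← ENNReal.ofReal_inv_of_pos (by linarith)]
    rw [show (2:ENNReal) = ENNReal.ofReal 2 from (ENNReal.ofReal_ofNat 2).symm]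
    rw [← ENNReal.ofReal_mul (by norm_num), ← div_eq_mul_inv]
  · intro hge
    rw [hmain]
    have htop : ∑' k : ℕ, (ENNReal.ofReal Eρ)^k = ⊤ := by
      refine top_le_iff.mp ?_
      calc (⊤:ENNReal) = ∑' _ : ℕ, (1:ENNReal) :=
            (ENNReal.tsum_const_eq_top_of_ne_zero one_ne_zero).symm
        _ ≤ ∑' k : ℕ, (ENNReal.ofReal Eρ)^k :=
            ENNReal.tsum_le_tsum (fun k =>
              one_le_pow_of_one_le' (ENNReal.one_le_ofReal.mpr hge) k)
    rw [htop, ENNReal.mul_top two_ne_zero]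
end

section
/- (Current as expected net crossings) Let G be a finite connected graph with symmetric positive conductances C_xy = C_yx > 0, C_x = Σ_y C_xy, and random walk transitions P_xy = C_xy / C_x. Fix distinct vertices a and b, and let u : V → ℝ be the function with u harmonic at every x ∉ {a, b}, u(b) = 0, normalized so that the total current out of a equals 1: Σ_y C_ay (u(a) - u(y)) = 1. For an edge xy define the current i_xy = C_xy (u(x) - u(y)). Then for every edge xy, i_xy equals the expected value, for the walk started at a and stopped at the hitting time T_b of b, of the number of transitions from x to y minus the number of transitions from y to x. -/
set_option linter.unusedSectionVars false
set_option linter.unusedVariables false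
set_option maxHeartbeats 1000000


open MeasureTheory ProbabilityTheory Filter

/-- The number of transitions of the path `f` from `x` to `y` strictly before
the hitting time of `b`: `#{n < T_b : f n = x, f (n+1) = y}`. -/
noncomputable def transitionCount {V : Type*} (b : V) (f : ℕ → V) (x y : V) : ℕ :=
  {n : ℕ | (∀ m ≤ n, f m ≠ b) ∧ f n = x ∧ f (n + 1) = y}.ncard

section Aux
variable {V : Type*} [Fintype V] [DecidableEq V]

/-- transition probability -/
noncomputable def nstep (C : V → V → ℝ) (x y : V) : ℝ := C x y / ∑ z, C x z

/-- killed (at `b`) n-step transition kernel -/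
noncomputable def nker (C : V → V → ℝ) (b : V) : ℕ → V → V → ℝ
  | 0, x, y => if x = y ∧ x ≠ b then 1 else 0
  | (n+1), x, y => if x = b then 0 else ∑ z, nstep C x z * nker C b n z y

variable {C : V → V → ℝ} {b : V}

lemma nstep_nonneg (h : ∀ x y, 0 ≤ C x y) (x y : V) : 0 ≤ nstep C x y :=
  div_nonneg (h x y) (Finset.sum_nonneg fun z _ => h x z)

lemma nstep_sum_eq_one (h : ∀ x y, 0 ≤ C x y) {x : V} (hx : 0 < ∑ z, C x z) :
    ∑ y, nstep C x y = 1 := by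
  simp only [nstep, ← Finset.sum_div]
  exact div_self hx.ne'

lemma nker_nonneg (h : ∀ x y, 0 ≤ C x y) : ∀ n x y, 0 ≤ nker C b n x y := by
  intro n
  induction n with
  | zero => intro x y; simp only [nker]; positivity
  | succ n ih =>
    intro x y; simp only [nker]
    split
    · exact le_refl 0
    · exact Finset.sum_nonneg fun z _ => mul_nonneg (nstep_nonneg h x z) (ih z y)

lemma nker_left_b : ∀ n y, nker C b n b y = 0 := by
  intro n y
  cases n with
  | zero => simp only [nker]; simp
  | succ n => simp [nker]

lemma nker_right_b : ∀ n x, nker C b n x b = 0 := by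
  intro n
  induction n with
  | zero => intro x; simp only [nker]; simp +contextual
  | succ n ih => intro x; simp [nker, ih]

/-- Chapman-Kolmogorov -/
lemma nker_add (n m : ℕ) (x y : V) :
    nker C b (n + m) x y = ∑ z, nker C b n x z * nker C b m z y := by
  induction n generalizing x with
  | zero =>
    simp only [Nat.zero_add]
    rw [Finset.sum_eq_single x]
    · by_cases hx : x = b
      · subst hx; simp [nker, nker_left_b]
      · simp [nker, hx]
    · intro z _ hz; simp [nker, hz.symm]
    · simp
  | succ n ih =>
    have : n + 1 + m = (n + m) + 1 := by ring
    rw [this]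
    show (if x = b then 0 else ∑ z, nstep C x z * nker C b (n+m) z y) = _
    by_cases hx : x = b
    · subst hx; simp [nker, nker_left_b]
    · simp only [if_neg hx]
      show _ = ∑ z, (if x = b then 0 else ∑ w, nstep C x w * nker C b n w z) * nker C b m z y
      simp only [if_neg hx]
      simp only [ih, Finset.mul_sum]
      rw [Finset.sum_comm]
      simp only [Finset.sum_mul, mul_assoc]

/-- back recursion -/
lemma nker_succ_right (n : ℕ) (x y : V) :
    nker C b (n + 1) x y = if y = b then 0 else ∑ z, nker C b n x z * nstep C z y := by
  rw [nker_add n 1]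
  by_cases hy : y = b
  · subst hy; simp [nker_right_b]
  · rw [if_neg hy]
    refine Finset.sum_congr rfl fun z _ => ?_
    by_cases hz : z = b
    · subst hz; rw [nker_right_b]; ring
    · have h1 : nker C b 1 z y = nstep C z y := by
        show (if z = b then 0 else ∑ w, nstep C z w * nker C b 0 w y) = nstep C z y
        rw [if_neg hz, Finset.sum_eq_single y]
        · simp [nker, hy]
        · intro w _ hw; simp [nker, hw]
        · simp
      rw [h1]

/-- row sums of the killed kernel -/
noncomputable def nrow (C : V → V → ℝ) (b : V) (n : ℕ) (x : V) : ℝ := ∑ y, nker C b n x y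

lemma nrow_nonneg (h : ∀ x y, 0 ≤ C x y) (n : ℕ) (x : V) : 0 ≤ nrow C b n x :=
  Finset.sum_nonneg fun y _ => nker_nonneg h n x y

lemma nrow_le_one (h : ∀ x y, 0 ≤ C x y) (hCs : ∀ x, 0 < ∑ z, C x z) :
    ∀ n x, nrow C b n x ≤ 1 := by
  intro n
  induction n with
  | zero =>
    intro x
    unfold nrow
    rw [Finset.sum_eq_single x]
    · simp only [nker]; split <;> norm_num
    · intro z _ hz; simp [nker, hz.symm]
    · simp
  | succ n ih =>
    intro x
    unfold nrow
    show (∑ y, if x = b then 0 else ∑ z, nstep C x z * nker C b n z y) ≤ 1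
    by_cases hx : x = b
    · simp [hx]
    · simp only [if_neg hx]
      rw [Finset.sum_comm]
      calc ∑ z, ∑ y, nstep C x z * nker C b n z y
          = ∑ z, nstep C x z * nrow C b n z := by
            refine Finset.sum_congr rfl fun z _ => ?_
            rw [← Finset.mul_sum]; rfl
        _ ≤ ∑ z, nstep C x z * 1 := by
            refine Finset.sum_le_sum fun z _ => ?_
            exact mul_le_mul_of_nonneg_left (ih z) (nstep_nonneg h x z)
        _ ≤ 1 := by
            simp only [mul_one]
            rw [nstep_sum_eq_one h (hCs x)]

lemma nrow_add_le_mul (h : ∀ x y, 0 ≤ C x y) (hCs : ∀ x, 0 < ∑ z, C x z)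
    (n m : ℕ) (x : V) (c : ℝ) (hc : 0 ≤ c) (hb : ∀ z, nrow C b m z ≤ c) :
    nrow C b (n + m) x ≤ c * nrow C b n x := by
  unfold nrow
  calc ∑ y, nker C b (n + m) x y
      = ∑ y, ∑ z, nker C b n x z * nker C b m z y := by
        exact Finset.sum_congr rfl fun y _ => nker_add n m x y
    _ = ∑ z, nker C b n x z * nrow C b m z := by
        rw [Finset.sum_comm]
        exact Finset.sum_congr rfl fun z _ => by rw [← Finset.mul_sum]; rfl
    _ ≤ ∑ z, nker C b n x z * c := by
        refine Finset.sum_le_sum fun z _ => ?_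
        exact mul_le_mul_of_nonneg_left (hb z) (nker_nonneg h n x z)
    _ = c * ∑ z, nker C b n x z := by rw [Finset.mul_sum]; exact Finset.sum_congr rfl fun z _ => mul_comm _ _
    _ = c * nrow C b n x := rfl

lemma nrow_anti (h : ∀ x y, 0 ≤ C x y) (hCs : ∀ x, 0 < ∑ z, C x z)
    {n m : ℕ} (hnm : n ≤ m) (x : V) : nrow C b m x ≤ nrow C b n x := by
  obtain ⟨k, rfl⟩ := Nat.exists_eq_add_of_le hnm
  have := nrow_add_le_mul (b := b) h hCs n k x 1 zero_le_one (nrow_le_one h hCs k)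
  simpa using this

lemma nrow_zero_b : nrow C b 0 b = 0 := by
  unfold nrow
  refine Finset.sum_eq_zero fun y _ => ?_
  simp only [nker]; simp

lemma nrow_succ (h : ∀ x y, 0 ≤ C x y) (n : ℕ) {x : V} (hx : x ≠ b) :
    nrow C b (n+1) x = ∑ z, nstep C x z * nrow C b n z := by
  unfold nrow
  show (∑ y, if x = b then 0 else ∑ z, nstep C x z * nker C b n z y) = _
  simp only [if_neg hx]
  rw [Finset.sum_comm]
  exact Finset.sum_congr rfl fun z _ => by rw [← Finset.mul_sum]

lemma exists_nrow_lt_one (h : ∀ x y, 0 ≤ C x y) (hCs : ∀ x, 0 < ∑ z, C x z)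
    (hconn : ∀ x y : V, ∃ (m : ℕ) (w : ℕ → V), w 0 = x ∧ w m = y ∧
      ∀ i < m, 0 < C (w i) (w (i + 1))) (z : V) :
    ∃ n, nrow C b n z < 1 := by
  -- propagation step
  have prop : ∀ x w : V, 0 < C x w → (∃ n, nrow C b n w < 1) → ∃ n, nrow C b n x < 1 := by
    intro x w hxw ⟨n, hn⟩
    by_cases hx : x = b
    · exact ⟨0, by rw [hx, nrow_zero_b]; norm_num⟩
    · refine ⟨n + 1, ?_⟩
      rw [nrow_succ h n hx]
      have hsw : 0 < nstep C x w := div_pos hxw (hCs x)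
      calc ∑ v, nstep C x v * nrow C b n v
          ≤ ∑ v, nstep C x v * (if v = w then nrow C b n w else 1) := by
            refine Finset.sum_le_sum fun v _ => ?_
            refine mul_le_mul_of_nonneg_left ?_ (nstep_nonneg h x v)
            split
            · next hv => subst hv; exact le_refl _
            · exact nrow_le_one h hCs n v
        _ = (∑ v, nstep C x v) - nstep C x w * (1 - nrow C b n w) := by
            have hterm : ∀ v : V, nstep C x v * (if v = w then nrow C b n w else 1)
                = nstep C x v - (if v = w then nstep C x w * (1 - nrow C b n w) else 0) := by
              intro v
              by_cases hv : v = w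
              · subst hv; simp only [eq_self_iff_true, if_true]; ring
              · simp [hv]
            simp only [hterm]
            rw [Finset.sum_sub_distrib, Finset.sum_ite_eq' Finset.univ w]
            simp
        _ = 1 - nstep C x w * (1 - nrow C b n w) := by rw [nstep_sum_eq_one h (hCs x)]
        _ < 1 := by
            have : 0 < nstep C x w * (1 - nrow C b n w) := mul_pos hsw (by linarith)
            linarith
  -- path from z to b
  obtain ⟨m, w, hw0, hwm, hwstep⟩ := hconn z b
  have base : ∃ n, nrow C b n b < 1 := ⟨0, by rw [nrow_zero_b]; norm_num⟩
  have key : ∀ k, k ≤ m → ∃ n, nrow C b n (w (m - k)) < 1 := by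
    intro k
    induction k with
    | zero => intro _; simpa [hwm] using base
    | succ k ih =>
      intro hk
      have hk' : k ≤ m := Nat.le_of_succ_le hk
      have hidx : m - (k+1) + 1 = m - k := by omega
      by_cases hb' : w (m - (k+1)) = b
      · exact ⟨0, by rw [hb', nrow_zero_b]; norm_num⟩
      · refine prop _ (w (m - k)) ?_ (ih hk')
        rw [← hidx]
        exact hwstep _ (by omega)
  have := key m (le_refl m)
  simpa [hw0] using this

lemma exists_geom (h : ∀ x y, 0 ≤ C x y) (hCs : ∀ x, 0 < ∑ z, C x z)
    (hconn : ∀ x y : V, ∃ (m : ℕ) (w : ℕ → V), w 0 = x ∧ w m = y ∧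
      ∀ i < m, 0 < C (w i) (w (i + 1))) (v₀ : V) :
    ∃ (N : ℕ) (ρ : ℝ), 1 ≤ N ∧ 0 ≤ ρ ∧ ρ < 1 ∧ ∀ k x, nrow C b (k * N) x ≤ ρ ^ k := by
  have hne : (Finset.univ : Finset V).Nonempty := ⟨v₀, Finset.mem_univ _⟩
  choose nf hnf using exists_nrow_lt_one (b := b) h hCs hconn
  set N : ℕ := max 1 (Finset.univ.sup nf) with hN
  have hN1 : 1 ≤ N := le_max_left _ _
  have hNz : ∀ z, nf z ≤ N := fun z => le_trans (Finset.le_sup (Finset.mem_univ z)) (le_max_right _ _)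
  set ρ : ℝ := Finset.univ.sup' hne (fun z => nrow C b N z) with hρ
  have hρ1 : ρ < 1 := by
    rw [hρ, Finset.sup'_lt_iff]
    intro z _
    exact lt_of_le_of_lt (nrow_anti h hCs (hNz z) z) (hnf z)
  have hρle : ∀ z, nrow C b N z ≤ ρ := fun z => Finset.le_sup' _ (Finset.mem_univ z)
  have hρ0 : 0 ≤ ρ := le_trans (nrow_nonneg h N v₀) (hρle v₀)
  refine ⟨N, ρ, hN1, hρ0, hρ1, ?_⟩
  intro k
  induction k with
  | zero => intro x; simpa using nrow_le_one h hCs 0 x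
  | succ k ih =>
    intro x
    have : (k+1) * N = (k * N) + N := by ring
    rw [this]
    calc nrow C b (k * N + N) x ≤ ρ ^ k * nrow C b N x := by
          rw [Nat.add_comm]
          exact nrow_add_le_mul h hCs N (k * N) x (ρ ^ k) (pow_nonneg hρ0 k) ih
      _ ≤ ρ ^ k * ρ := mul_le_mul_of_nonneg_left (hρle x) (pow_nonneg hρ0 k)
      _ = ρ ^ (k+1) := by ring

lemma summable_nrow (h : ∀ x y, 0 ≤ C x y) (hCs : ∀ x, 0 < ∑ z, C x z)
    (hconn : ∀ x y : V, ∃ (m : ℕ) (w : ℕ → V), w 0 = x ∧ w m = y ∧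
      ∀ i < m, 0 < C (w i) (w (i + 1))) (a : V) :
    Summable (fun n => nrow C b n a) := by
  obtain ⟨N, ρ, hN1, hρ0, hρ1, hgeom⟩ := exists_geom (b := b) h hCs hconn a
  have hNpos : 0 < N := hN1
  refine summable_of_sum_range_le (fun n => nrow_nonneg h n a) (c := N * (1 - ρ)⁻¹) ?_
  intro m
  set K := m / N + 1 with hK
  have hmK : m ≤ K * N :=
    le_of_lt (by rw [hK]; exact (Nat.div_lt_iff_lt_mul hNpos).mp (Nat.lt_succ_self _))
  calc ∑ i ∈ Finset.range m, nrow C b i a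
      ≤ ∑ i ∈ Finset.range (K * N), nrow C b i a := by
        refine Finset.sum_le_sum_of_subset_of_nonneg ?_ (fun i _ _ => nrow_nonneg h i a)
        exact Finset.range_subset_range.mpr hmK
    _ ≤ ∑ k ∈ Finset.range K, (N : ℝ) * ρ ^ k := by
        clear hmK hK
        induction K with
        | zero => simp
        | succ K ihK =>
          have h1 : (K+1) * N = K * N + N := by ring
          rw [h1, Finset.sum_range_add, Finset.sum_range_succ]
          refine add_le_add ihK ?_
          calc ∑ i ∈ Finset.range N, nrow C b (K * N + i) a
              ≤ ∑ i ∈ Finset.range N, ρ ^ K := by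
                refine Finset.sum_le_sum fun i _ => ?_
                exact le_trans (nrow_anti h hCs (Nat.le_add_right _ _) a) (hgeom K a)
            _ = N * ρ ^ K := by simp [Finset.sum_const, nsmul_eq_mul]
    _ = N * ∑ k ∈ Finset.range K, ρ ^ k := by rw [Finset.mul_sum]
    _ ≤ N * (1 - ρ)⁻¹ := by
        refine mul_le_mul_of_nonneg_left ?_ (by positivity)
        calc ∑ k ∈ Finset.range K, ρ ^ k ≤ ∑' k, ρ ^ k :=
              Summable.sum_le_tsum _ (fun k _ => pow_nonneg hρ0 k) (summable_geometric_of_lt_one hρ0 hρ1)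
          _ = (1 - ρ)⁻¹ := tsum_geometric_of_lt_one hρ0 hρ1

lemma summable_nker (h : ∀ x y, 0 ≤ C x y) (hCs : ∀ x, 0 < ∑ z, C x z)
    (hconn : ∀ x y : V, ∃ (m : ℕ) (w : ℕ → V), w 0 = x ∧ w m = y ∧
      ∀ i < m, 0 < C (w i) (w (i + 1))) (a x : V) :
    Summable (fun n => nker C b n a x) := by
  refine Summable.of_nonneg_of_le (f := fun n => nrow C b n a)
    (fun n => nker_nonneg h n a x) (fun n => ?_)
    (summable_nrow (b := b) h hCs hconn a)
  exact Finset.single_le_sum (fun y _ => nker_nonneg h n a y) (Finset.mem_univ x)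

/-- sum over killed paths from `a` to `x` of length `n` -/
noncomputable def pathSum (C : V → V → ℝ) (b : V) (n : ℕ) (a x : V) : ℝ :=
  ∑ g : Fin (n+1) → V, if g 0 = a ∧ (∀ i, g i ≠ b) ∧ g (Fin.last n) = x
    then ∏ i : Fin n, nstep C (g i.castSucc) (g i.succ) else 0

lemma pathSum_zero (a x : V) : pathSum C b 0 a x = nker C b 0 a x := by
  unfold pathSum
  rw [← Equiv.sum_comp (Equiv.funUnique (Fin 1) V).symm]
  show (∑ v : V, if (fun _ => v) 0 = a ∧ (∀ i : Fin 1, (fun _ => v) i ≠ b) ∧ _ = x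
      then ∏ i : Fin 0, _ else 0) = _
  simp only [Finset.univ_unique, Fin.prod_univ_zero]
  rw [Finset.sum_eq_single a]
  · show (if a = a ∧ (∀ _ : Fin 1, a ≠ b) ∧ a = x then (1:ℝ) else 0) = nker C b 0 a x
    show _ = if a = x ∧ a ≠ b then (1:ℝ) else 0
    by_cases h1 : a = x <;> by_cases h2 : a = b <;> simp [h1, h2]
  · intro v _ hv
    rw [if_neg]
    rintro ⟨rfl, -⟩; exact hv rfl
  · simp

lemma pathSum_succ (n : ℕ) (a x : V) :
    pathSum C b (n+1) a x = if a = b then 0 else ∑ z, nstep C a z * pathSum C b n z x := by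
  unfold pathSum
  rw [← Equiv.sum_comp (Fin.consEquiv (fun _ : Fin (n+2) => V)), Fintype.sum_prod_type]
  have hterm2 : ∀ (v : V) (g' : Fin (n+1) → V),
      (if (Fin.cons v g' : Fin (n+2) → V) 0 = a ∧ (∀ i, (Fin.cons v g' : Fin (n+2) → V) i ≠ b) ∧
          (Fin.cons v g' : Fin (n+2) → V) (Fin.last (n+1)) = x
        then ∏ i : Fin (n+1), nstep C ((Fin.cons v g' : Fin (n+2) → V) i.castSucc)
          ((Fin.cons v g' : Fin (n+2) → V) i.succ) else 0)
      = if v = a ∧ v ≠ b ∧ (∀ i, g' i ≠ b) ∧ g' (Fin.last n) = x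
        then nstep C v (g' 0) * ∏ i : Fin n, nstep C (g' i.castSucc) (g' i.succ) else 0 := by
    intro v g'
    have hcond : ((Fin.cons v g' : Fin (n+2) → V) 0 = a ∧ (∀ i, (Fin.cons v g' : Fin (n+2) → V) i ≠ b) ∧
          (Fin.cons v g' : Fin (n+2) → V) (Fin.last (n+1)) = x)
        ↔ (v = a ∧ v ≠ b ∧ (∀ i, g' i ≠ b) ∧ g' (Fin.last n) = x) := by
      rw [Fin.forall_fin_succ]
      rw [← Fin.succ_last, Fin.cons_succ]
      simp only [Fin.cons_zero, Fin.cons_succ]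
      tauto
    have hprod : (∏ i : Fin (n+1), nstep C ((Fin.cons v g' : Fin (n+2) → V) i.castSucc)
          ((Fin.cons v g' : Fin (n+2) → V) i.succ))
        = nstep C v (g' 0) * ∏ i : Fin n, nstep C (g' i.castSucc) (g' i.succ) := by
      rw [Fin.prod_univ_succ]
      have h0 : nstep C ((Fin.cons v g' : Fin (n+2) → V) (Fin.castSucc 0))
          ((Fin.cons v g' : Fin (n+2) → V) (Fin.succ 0)) = nstep C v (g' 0) := by
        rw [Fin.castSucc_zero, Fin.cons_zero, Fin.cons_succ]
      rw [h0]
      congr 1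
    rw [hprod]
    by_cases hc : v = a ∧ v ≠ b ∧ (∀ i, g' i ≠ b) ∧ g' (Fin.last n) = x
    · rw [if_pos (hcond.mpr hc), if_pos hc]
    · rw [if_neg (fun hcc => hc (hcond.mp hcc)), if_neg hc]
  simp only [Fin.consEquiv_apply, hterm2]
  rw [Finset.sum_eq_single a]
  rotate_left
  · intro v _ hv
    refine Finset.sum_eq_zero fun g' _ => ?_
    rw [if_neg]; rintro ⟨rfl, -⟩; exact hv rfl
  · intro hmem; exact absurd (Finset.mem_univ a) hmem
  by_cases hab : a = b
  · rw [if_pos hab]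
    refine Finset.sum_eq_zero fun g' _ => ?_
    rw [if_neg]; rintro ⟨-, h2, -⟩; exact h2 hab
  · rw [if_neg hab]
    have hswap : ∀ g' : Fin (n+1) → V,
        (if a = a ∧ a ≠ b ∧ (∀ i, g' i ≠ b) ∧ g' (Fin.last n) = x
          then nstep C a (g' 0) * ∏ i : Fin n, nstep C (g' i.castSucc) (g' i.succ) else 0)
        = ∑ z, (if g' 0 = z then nstep C a z *
            (if g' 0 = z ∧ (∀ i, g' i ≠ b) ∧ g' (Fin.last n) = x
              then ∏ i : Fin n, nstep C (g' i.castSucc) (g' i.succ) else 0) else 0) := by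
      intro g'
      rw [Finset.sum_ite_eq Finset.univ (g' 0)]
      rw [if_pos (Finset.mem_univ _)]
      by_cases hc : (∀ i, g' i ≠ b) ∧ g' (Fin.last n) = x
      · rw [if_pos ⟨rfl, hab, hc.1, hc.2⟩, if_pos ⟨rfl, hc.1, hc.2⟩]
      · rw [if_neg (by tauto), if_neg (by tauto), mul_zero]
    rw [Finset.sum_congr rfl (fun g' _ => hswap g'), Finset.sum_comm]
    refine Finset.sum_congr rfl fun z _ => ?_
    rw [Finset.mul_sum]
    refine Finset.sum_congr rfl fun g' _ => ?_
    by_cases hz : g' 0 = z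
    · rw [if_pos hz]
    · rw [if_neg hz, if_neg (by tauto), mul_zero]

lemma pathSum_eq_nker : ∀ (n : ℕ) (a x : V), pathSum C b n a x = nker C b n a x := by
  intro n
  induction n with
  | zero => exact pathSum_zero
  | succ n ih =>
    intro a x
    rw [pathSum_succ]
    show _ = if a = b then 0 else ∑ z, nstep C a z * nker C b n z x
    by_cases hab : a = b
    · rw [if_pos hab, if_pos hab]
    · rw [if_neg hab, if_neg hab]
      exact Finset.sum_congr rfl fun z _ => by rw [ih]

def finSnocEquiv (n : ℕ) (α : Type*) : ((Fin (n+1) → α) × α) ≃ (Fin (n+2) → α) where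
  toFun p := Fin.snoc p.1 p.2
  invFun g := (fun i => g i.castSucc, g (Fin.last (n+1)))
  left_inv p := by
    obtain ⟨g', v⟩ := p
    refine Prod.ext ?_ ?_
    · funext i; simp
    · simp
  right_inv g := Fin.snoc_init_self g

lemma sum_fin_paths (n : ℕ) (a x y : V) :
    (∑ g : Fin (n+2) → V, if (g 0 = a ∧ (∀ i : Fin (n+2), (i:ℕ) ≤ n → g i ≠ b) ∧
        g (Fin.castSucc (Fin.last n)) = x ∧ g (Fin.last (n+1)) = y)
      then ∏ i : Fin (n+1), nstep C (g i.castSucc) (g i.succ) else 0)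
    = nker C b n a x * nstep C x y := by
  rw [← Equiv.sum_comp (finSnocEquiv n V), Fintype.sum_prod_type]
  have hterm : ∀ (g' : Fin (n+1) → V) (v : V),
      (if ((Fin.snoc g' v : Fin (n+2) → V) 0 = a ∧
          (∀ i : Fin (n+2), (i:ℕ) ≤ n → (Fin.snoc g' v : Fin (n+2) → V) i ≠ b) ∧
          (Fin.snoc g' v : Fin (n+2) → V) (Fin.castSucc (Fin.last n)) = x ∧
          (Fin.snoc g' v : Fin (n+2) → V) (Fin.last (n+1)) = y)
        then ∏ i : Fin (n+1), nstep C ((Fin.snoc g' v : Fin (n+2) → V) i.castSucc)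
          ((Fin.snoc g' v : Fin (n+2) → V) i.succ) else 0)
      = if (g' 0 = a ∧ (∀ j, g' j ≠ b) ∧ g' (Fin.last n) = x ∧ v = y)
        then (∏ i : Fin n, nstep C (g' i.castSucc) (g' i.succ)) * nstep C (g' (Fin.last n)) v
        else 0 := by
    intro g' v
    have h0 : (Fin.snoc g' v : Fin (n+2) → V) 0 = g' 0 := by
      rw [← Fin.castSucc_zero, Fin.snoc_castSucc]
    have hlast : (Fin.snoc g' v : Fin (n+2) → V) (Fin.castSucc (Fin.last n)) = g' (Fin.last n) :=
      Fin.snoc_castSucc _ _ _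
    have hlast2 : (Fin.snoc g' v : Fin (n+2) → V) (Fin.last (n+1)) = v := Fin.snoc_last _ _
    have hmid : (∀ i : Fin (n+2), (i:ℕ) ≤ n → (Fin.snoc g' v : Fin (n+2) → V) i ≠ b)
        ↔ (∀ j : Fin (n+1), g' j ≠ b) := by
      constructor
      · intro hi j
        have := hi j.castSucc (by simpa using Fin.is_le j)
        rwa [Fin.snoc_castSucc] at this
      · intro hj i hin
        have hieq : i = Fin.castSucc ⟨(i:ℕ), by omega⟩ := by apply Fin.ext; simp
        rw [hieq, Fin.snoc_castSucc]
        exact hj _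
    have hprod : (∏ i : Fin (n+1), nstep C ((Fin.snoc g' v : Fin (n+2) → V) i.castSucc)
          ((Fin.snoc g' v : Fin (n+2) → V) i.succ))
        = (∏ i : Fin n, nstep C (g' i.castSucc) (g' i.succ)) * nstep C (g' (Fin.last n)) v := by
      rw [Fin.prod_univ_castSucc]
      congr 1
      · refine Finset.prod_congr rfl fun i _ => ?_
        rw [Fin.succ_castSucc, Fin.snoc_castSucc, Fin.snoc_castSucc]
      · rw [Fin.succ_last, Fin.snoc_castSucc, Fin.snoc_last]
    rw [hprod]
    by_cases hc : g' 0 = a ∧ (∀ j, g' j ≠ b) ∧ g' (Fin.last n) = x ∧ v = y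
    · rw [if_pos, if_pos hc]
      rw [h0, hmid, hlast, hlast2]
      exact hc
    · rw [if_neg, if_neg hc]
      rw [h0, hmid, hlast, hlast2]
      exact hc
  simp only [show ∀ p, finSnocEquiv n V p = Fin.snoc p.1 p.2 from fun p => rfl, hterm]
  have hswap : ∀ g' : Fin (n+1) → V,
      (∑ v, if (g' 0 = a ∧ (∀ j, g' j ≠ b) ∧ g' (Fin.last n) = x ∧ v = y)
        then (∏ i : Fin n, nstep C (g' i.castSucc) (g' i.succ)) * nstep C (g' (Fin.last n)) v
        else 0)
      = (if (g' 0 = a ∧ (∀ j, g' j ≠ b) ∧ g' (Fin.last n) = x)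
          then ∏ i : Fin n, nstep C (g' i.castSucc) (g' i.succ) else 0) * nstep C x y := by
    intro g'
    rw [Finset.sum_eq_single y]
    · by_cases hc : g' 0 = a ∧ (∀ j, g' j ≠ b) ∧ g' (Fin.last n) = x
      · rw [if_pos ⟨hc.1, hc.2.1, hc.2.2, rfl⟩, if_pos hc, hc.2.2]
      · rw [if_neg (by tauto), if_neg hc, zero_mul]
    · intro v _ hv
      rw [if_neg (by tauto)]
    · intro hy; exact absurd (Finset.mem_univ y) hy
  rw [Finset.sum_congr rfl (fun g' _ => hswap g'), ← Finset.sum_mul]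
  congr 1
  exact pathSum_eq_nker n a x

section MeasPart
variable [MeasurableSpace V] [MeasurableSingletonClass V]

lemma measurable_cyl (n : ℕ) (γ : ℕ → V) : MeasurableSet {f : ℕ → V | ∀ i ≤ n, f i = γ i} := by
  have hrw : {f : ℕ → V | ∀ i ≤ n, f i = γ i}
      = ⋂ i, ⋂ (_ : i ≤ n), (fun f : ℕ → V => f i) ⁻¹' {γ i} := by
    ext f; simp
  rw [hrw]
  exact MeasurableSet.iInter fun i => MeasurableSet.iInter fun _ =>
    (measurable_pi_apply i) (measurableSet_singleton _)

lemma measurable_Aset (n : ℕ) (x y : V) :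
    MeasurableSet {f : ℕ → V | (∀ m ≤ n, f m ≠ b) ∧ f n = x ∧ f (n+1) = y} := by
  have hrw : {f : ℕ → V | (∀ m ≤ n, f m ≠ b) ∧ f n = x ∧ f (n+1) = y}
      = (⋂ m, ⋂ (_ : m ≤ n), (fun f : ℕ → V => f m) ⁻¹' ({b}ᶜ)) ∩
        ((fun f : ℕ → V => f n) ⁻¹' {x} ∩ (fun f : ℕ → V => f (n+1)) ⁻¹' {y}) := by
    ext f; simp
  rw [hrw]
  refine ((MeasurableSet.iInter fun m => MeasurableSet.iInter fun _ =>
    (measurable_pi_apply m) (measurableSet_singleton b).compl)).inter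
    (((measurable_pi_apply n) (measurableSet_singleton x)).inter
      ((measurable_pi_apply (n+1)) (measurableSet_singleton y)))

lemma K_Aset (h : ∀ x y, 0 ≤ C x y)
    (K : V → Measure (ℕ → V))
    (hK : ∀ (z : V) (n : ℕ) (γ : ℕ → V),
      K z {f | ∀ i ≤ n, f i = γ i} =
        ENNReal.ofReal ((if γ 0 = z then 1 else 0) *
          ∏ i ∈ Finset.range n, C (γ i) (γ (i + 1)) / ∑ u, C (γ i) u))
    (a : V) (n : ℕ) (x y : V) :
    K a {f | (∀ m ≤ n, f m ≠ b) ∧ f n = x ∧ f (n+1) = y}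
      = ENNReal.ofReal (nker C b n a x * nstep C x y) := by
  classical
  set ext2 : (Fin (n+2) → V) → ℕ → V := fun g i => if h : i < n+2 then g ⟨i, h⟩ else x with hext2
  have hext_lt : ∀ (g : Fin (n+2) → V) (i : ℕ) (hi : i < n+2), ext2 g i = g ⟨i, hi⟩ := by
    intro g i hi; simp only [hext2, dif_pos hi]
  set Q : (Fin (n+2) → V) → Prop := fun g =>
    (∀ i : Fin (n+2), (i:ℕ) ≤ n → g i ≠ b) ∧
    g (Fin.castSucc (Fin.last n)) = x ∧ g (Fin.last (n+1)) = y with hQ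
  have hvaln : ((Fin.castSucc (Fin.last n) : Fin (n+2)) : ℕ) = n := by simp
  have hvaln1 : ((Fin.last (n+1) : Fin (n+2)) : ℕ) = n+1 := by simp
  have hset : {f : ℕ → V | (∀ m ≤ n, f m ≠ b) ∧ f n = x ∧ f (n+1) = y}
      = ⋃ g ∈ Finset.univ.filter Q, {f : ℕ → V | ∀ i ≤ n+1, f i = ext2 g i} := by
    ext f
    simp only [Set.mem_iUnion, Finset.mem_filter, Finset.mem_univ, true_and, Set.mem_setOf_eq]
    constructor
    · rintro ⟨h1, h2, h3⟩
      refine ⟨fun i : Fin (n+2) => f i, ⟨fun i hi => h1 _ hi, ?_, ?_⟩, ?_⟩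
      · show f _ = x; rw [hvaln]; exact h2
      · show f _ = y; rw [hvaln1]; exact h3
      · intro i hi
        exact (hext_lt (fun j : Fin (n+2) => f (j:ℕ)) i (by omega)).symm
    · rintro ⟨g, ⟨hq1, hq2, hq3⟩, hcyl⟩
      have hfg : ∀ i : ℕ, (hi : i < n+2) → f i = g ⟨i, hi⟩ := by
        intro i hi
        rw [hcyl i (by omega), hext_lt]
      refine ⟨?_, ?_, ?_⟩
      · intro m hm
        rw [hfg m (by omega)]
        exact hq1 ⟨m, by omega⟩ hm
      · have hfin : (⟨n, by omega⟩ : Fin (n+2)) = Fin.castSucc (Fin.last n) := by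
          apply Fin.ext; simp
        rw [hfg n (by omega), hfin]; exact hq2
      · have hfin : (⟨n+1, by omega⟩ : Fin (n+2)) = Fin.last (n+1) := by
          apply Fin.ext; simp
        rw [hfg (n+1) (by omega), hfin]; exact hq3
  have hdisj : (↑(Finset.univ.filter Q) : Set (Fin (n+2) → V)).PairwiseDisjoint
      (fun g => {f : ℕ → V | ∀ i ≤ n+1, f i = ext2 g i}) := by
    intro g1 _ g2 _ hne
    refine Set.disjoint_left.mpr fun f hf1 hf2 => hne ?_
    funext i
    have hilt := i.is_lt
    have e1 := hf1 (i : ℕ) (by omega)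
    have e2 := hf2 (i : ℕ) (by omega)
    rw [hext_lt _ _ (by omega)] at e1 e2
    have e3 := e1.symm.trans e2
    simpa using e3
  rw [hset, measure_biUnion_finset hdisj (fun g _ => measurable_cyl (n+1) (ext2 g))]
  have hKval : ∀ g : Fin (n+2) → V,
      K a {f : ℕ → V | ∀ i ≤ n+1, f i = ext2 g i}
      = ENNReal.ofReal ((if ext2 g 0 = a then 1 else 0) *
          ∏ i ∈ Finset.range (n+1), nstep C (ext2 g i) (ext2 g (i+1))) := by
    intro g
    exact hK a (n+1) (ext2 g)
  rw [Finset.sum_congr rfl (fun g _ => hKval g)]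
  rw [← ENNReal.ofReal_sum_of_nonneg (by
    intro g _
    refine mul_nonneg ?_ (Finset.prod_nonneg fun i _ => nstep_nonneg h _ _)
    split <;> norm_num)]
  congr 1
  rw [Finset.sum_filter]
  rw [← sum_fin_paths (C := C) (b := b) n a x y]
  refine Finset.sum_congr rfl fun g _ => ?_
  have hgg : ∀ (m : ℕ) (hm : m < n+2) (j : Fin (n+2)), (j:ℕ) = m → g ⟨m, hm⟩ = g j := by
    intro m hm j hj
    congr 1
    apply Fin.ext
    simp [hj]
  have h00 : ext2 g 0 = g 0 := by
    rw [hext_lt g 0 (by omega)]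
    exact hgg 0 (by omega) 0 (by simp)
  have hprodrw : ((if ext2 g 0 = a then (1:ℝ) else 0) *
        ∏ i ∈ Finset.range (n+1), nstep C (ext2 g i) (ext2 g (i+1)))
      = (if g 0 = a then (1:ℝ) else 0) *
        ∏ i : Fin (n+1), nstep C (g i.castSucc) (g i.succ) := by
    rw [h00]
    congr 1
    rw [← Fin.prod_univ_eq_prod_range (fun i => nstep C (ext2 g i) (ext2 g (i+1))) (n+1)]
    refine Finset.prod_congr rfl fun i _ => ?_
    have hilt := i.is_lt
    rw [hext_lt g i (by omega), hext_lt g (i+1) (by omega),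
      hgg (i:ℕ) (by omega) i.castSucc (by simp), hgg ((i:ℕ)+1) (by omega) i.succ (by simp)]
  by_cases hQg : Q g
  · obtain ⟨hq1, hq2, hq3⟩ := hQg
    by_cases ha : g 0 = a
    · rw [if_pos ⟨hq1, hq2, hq3⟩, hprodrw, if_pos ha, one_mul,
        if_pos (show g 0 = a ∧ (∀ i : Fin (n+2), (i:ℕ) ≤ n → g i ≠ b) ∧
          g (Fin.castSucc (Fin.last n)) = x ∧ g (Fin.last (n+1)) = y from ⟨ha, hq1, hq2, hq3⟩)]
    · rw [if_pos ⟨hq1, hq2, hq3⟩, hprodrw, if_neg ha, zero_mul,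
        if_neg (fun hc => ha hc.1)]
  · rw [if_neg hQg, if_neg (fun hc => hQg ⟨hc.2.1, hc.2.2.1, hc.2.2.2⟩)]

lemma integral_transitionCount
    (hnonneg : ∀ x y, 0 ≤ C x y)
    (hCs : ∀ x, 0 < ∑ z, C x z)
    (hconn : ∀ x y : V, ∃ (m : ℕ) (w : ℕ → V), w 0 = x ∧ w m = y ∧
      ∀ i < m, 0 < C (w i) (w (i + 1)))
    (K : V → Measure (ℕ → V))
    (hK : ∀ (z : V) (n : ℕ) (γ : ℕ → V),
      K z {f | ∀ i ≤ n, f i = γ i} =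
        ENNReal.ofReal ((if γ 0 = z then 1 else 0) *
          ∏ i ∈ Finset.range n, C (γ i) (γ (i + 1)) / ∑ u, C (γ i) u))
    (a p q : V) :
    Integrable (fun f => (transitionCount b f p q : ℝ)) (K a) ∧
    ∫ f, (transitionCount b f p q : ℝ) ∂(K a)
      = (∑' n, nker C b n a p) * nstep C p q := by
  classical
  set A : ℕ → Set (ℕ → V) := fun n => {f | (∀ m ≤ n, f m ≠ b) ∧ f n = p ∧ f (n+1) = q} with hA
  have hAm : ∀ n, MeasurableSet (A n) := fun n => measurable_Aset n p q
  have hKA : ∀ n, K a (A n) = ENNReal.ofReal (nker C b n a p * nstep C p q) :=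
    fun n => K_Aset hnonneg K hK a n p q
  have hstep_le_one : ∀ (v w : V), nstep C v w ≤ 1 := by
    intro v w
    rw [← nstep_sum_eq_one hnonneg (hCs v)]
    exact Finset.single_le_sum (fun z _ => nstep_nonneg hnonneg v z) (Finset.mem_univ w)
  -- the set of paths never hitting b is null
  have hDnull : K a {f : ℕ → V | ∀ m, f m ≠ b} = 0 := by
    have hD : ∀ N : ℕ, K a {f : ℕ → V | ∀ m ≤ N, f m ≠ b} ≤ ENNReal.ofReal (nrow C b N a) := by
      intro N
      have hsub : {f : ℕ → V | ∀ m ≤ N, f m ≠ b}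
          = ⋃ pq ∈ (Finset.univ : Finset (V × V)),
            {f : ℕ → V | (∀ m ≤ N, f m ≠ b) ∧ f N = pq.1 ∧ f (N+1) = pq.2} := by
        ext f
        simp only [Set.mem_iUnion, Set.mem_setOf_eq, Finset.mem_univ, exists_prop, true_and,
          exists_true_left]
        constructor
        · intro hf; exact ⟨(f N, f (N+1)), hf, rfl, rfl⟩
        · rintro ⟨pq, hf, -, -⟩; exact hf
      calc K a {f : ℕ → V | ∀ m ≤ N, f m ≠ b}
          ≤ ∑ pq : V × V, K a {f : ℕ → V | (∀ m ≤ N, f m ≠ b) ∧ f N = pq.1 ∧ f (N+1) = pq.2} := by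
            rw [hsub]; exact measure_biUnion_finset_le _ _
        _ = ∑ pq : V × V, ENNReal.ofReal (nker C b N a pq.1 * nstep C pq.1 pq.2) :=
            Finset.sum_congr rfl fun pq _ => K_Aset hnonneg K hK a N pq.1 pq.2
        _ = ENNReal.ofReal (∑ pq : V × V, nker C b N a pq.1 * nstep C pq.1 pq.2) :=
            (ENNReal.ofReal_sum_of_nonneg (fun pq _ => mul_nonneg
              (nker_nonneg hnonneg N a pq.1) (nstep_nonneg hnonneg pq.1 pq.2))).symm
        _ = ENNReal.ofReal (nrow C b N a) := by
            congr 1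
            rw [Fintype.sum_prod_type]
            unfold nrow
            refine Finset.sum_congr rfl fun v _ => ?_
            show (∑ w : V, nker C b N a v * nstep C v w) = nker C b N a v
            rw [← Finset.mul_sum, nstep_sum_eq_one hnonneg (hCs v), mul_one]
    have htend : Tendsto (fun N => ENNReal.ofReal (nrow C b N a)) atTop (nhds 0) := by
      have h1 := (summable_nrow (b := b) hnonneg hCs hconn a).tendsto_atTop_zero
      have h2 := ENNReal.tendsto_ofReal h1
      simpa using h2
    refine le_antisymm ?_ zero_le
    refine ge_of_tendsto htend (Filter.Eventually.of_forall fun N => ?_)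
    have hss : {f : ℕ → V | ∀ m, f m ≠ b} ⊆ {f : ℕ → V | ∀ m ≤ N, f m ≠ b} :=
      fun f hf m _ => hf m
    exact le_trans (measure_mono hss) (hD N)
  set F : (ℕ → V) → ENNReal := fun f => ∑' n, (A n).indicator 1 f with hF
  have hFmeas : Measurable F :=
    Measurable.ennreal_tsum (fun n => measurable_const.indicator (hAm n))
  have hae : ∀ᵐ f ∂(K a), ((transitionCount b f p q : ℕ) : ENNReal) = F f := by
    refine Filter.eventually_of_mem
      (show {f : ℕ → V | ∀ m, f m ≠ b}ᶜ ∈ ae (K a) from ?_) ?_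
    · rw [mem_ae_iff, compl_compl]; exact hDnull
    · intro f hf
      simp only [Set.mem_compl_iff, Set.mem_setOf_eq, not_forall, not_not] at hf
      obtain ⟨m₀, hm₀⟩ := hf
      have hnotin : ∀ n, m₀ ≤ n → f ∉ A n := by
        intro n hn hfA
        exact hfA.1 m₀ hn hm₀
      have hIfin : {n : ℕ | (∀ m ≤ n, f m ≠ b) ∧ f n = p ∧ f (n+1) = q}
          = ↑((Finset.range m₀).filter (fun n => f ∈ A n)) := by
        ext n
        simp only [Finset.coe_filter, Finset.mem_range, Set.mem_setOf_eq]
        constructor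
        · intro hn
          refine ⟨Nat.lt_of_not_le fun hge => hnotin n hge hn, hn⟩
        · intro hn; exact hn.2
      have hcnt : transitionCount b f p q = ((Finset.range m₀).filter (fun n => f ∈ A n)).card := by
        rw [transitionCount, hIfin, Set.ncard_coe_finset]
      have hFval : F f = (((Finset.range m₀).filter (fun n => f ∈ A n)).card : ENNReal) := by
        have hF0 : F f = ∑' (n : ℕ), (A n).indicator 1 f := rfl
        rw [hF0]
        rw [tsum_eq_sum (s := (Finset.range m₀).filter (fun n => f ∈ A n)) ?_]
        · rw [Finset.sum_congr rfl (fun n hn =>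
            Set.indicator_of_mem (Finset.mem_filter.mp hn).2 (1 : (ℕ → V) → ENNReal))]
          simp
        · intro n hn
          refine Set.indicator_of_notMem ?_ _
          intro hfA
          refine hn (Finset.mem_filter.mpr ⟨Finset.mem_range.mpr ?_, hfA⟩)
          exact Nat.lt_of_not_le fun hge => hnotin n hge hfA
      rw [hcnt, hFval]
  have hlint : ∫⁻ f, F f ∂(K a) = ∑' n, K a (A n) := by
    have hF1 : ∫⁻ f, F f ∂(K a) = ∫⁻ f, ∑' n, (A n).indicator 1 f ∂(K a) := rfl
    rw [hF1]
    simp only [Pi.one_def]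
    rw [lintegral_tsum (fun n => (measurable_const.indicator (hAm n)).aemeasurable)]
    refine tsum_congr fun n => ?_
    rw [← lintegral_indicator_one (hAm n)]
    simp [Pi.one_def]
  have hnn : ∀ n, (0:ℝ) ≤ nker C b n a p * nstep C p q :=
    fun n => mul_nonneg (nker_nonneg hnonneg n a p) (nstep_nonneg hnonneg p q)
  have hsummable : Summable (fun n => nker C b n a p * nstep C p q) :=
    (summable_nker (b := b) hnonneg hCs hconn a p).mul_right _
  have htsum : ∑' n, K a (A n) = ENNReal.ofReal ((∑' n, nker C b n a p) * nstep C p q) := by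
    rw [tsum_congr (fun n => hKA n), ← ENNReal.ofReal_tsum_of_nonneg hnn hsummable,
      tsum_mul_right]
  have hfin : ∑' n, K a (A n) ≠ ⊤ := by rw [htsum]; exact ENNReal.ofReal_ne_top
  have hInt0 : Integrable (fun f => (F f).toReal) (K a) :=
    integrable_toReal_of_lintegral_ne_top hFmeas.aemeasurable (by rw [hlint]; exact hfin)
  have haeR : (fun f => (F f).toReal) =ᵐ[K a] (fun f => (transitionCount b f p q : ℝ)) := by
    filter_upwards [hae] with f hf
    rw [← hf]
    simp
  constructor
  · exact hInt0.congr haeR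
  · rw [← integral_congr_ae haeR, integral_toReal hFmeas.aemeasurable ?_, hlint, htsum,
      ENNReal.toReal_ofReal (mul_nonneg (tsum_nonneg fun n => nker_nonneg hnonneg n a p)
        (nstep_nonneg hnonneg p q))]
    filter_upwards [hae] with f hf
    rw [← hf]
    simp

end MeasPart

lemma harmonic_le (hnonneg : ∀ x y, 0 ≤ C x y)
    (hCs : ∀ x, 0 < ∑ z, C x z)
    (hconn : ∀ x y : V, ∃ (m : ℕ) (w : ℕ → V), w 0 = x ∧ w m = y ∧
      ∀ i < m, 0 < C (w i) (w (i + 1)))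
    (w : V → ℝ) (hwb : w b = 0)
    (hharm : ∀ x, x ≠ b → w x = ∑ y, C x y / (∑ z, C x z) * w y) :
    ∀ x, w x ≤ 0 := by
  obtain ⟨x₀, -, hx₀⟩ := Finset.exists_max_image Finset.univ w ⟨b, Finset.mem_univ b⟩
  have hx₀max : ∀ v, w v ≤ w x₀ := fun v => hx₀ v (Finset.mem_univ v)
  set M := w x₀ with hM
  have key : ∀ v, w v = M → v ≠ b → ∀ y, 0 < C v y → w y = M := by
    intro v hv hvb y hCy
    have h1 : M = ∑ y, C v y / (∑ z, C v z) * w y := hv ▸ hharm v hvb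
    have hsum1 : ∑ y, C v y / (∑ z, C v z) * M = M := by
      rw [← Finset.sum_mul,
        show (∑ y, C v y / (∑ z, C v z)) = 1 from nstep_sum_eq_one hnonneg (hCs v), one_mul]
    have h2 : ∑ y, C v y / (∑ z, C v z) * (M - w y) = 0 := by
      simp only [mul_sub]
      rw [Finset.sum_sub_distrib, hsum1, ← h1, sub_self]
    have h3 := (Finset.sum_eq_zero_iff_of_nonneg (fun i _ =>
      mul_nonneg (div_nonneg (hnonneg v i) (le_of_lt (hCs v)))
        (by linarith [hx₀max i]))).mp h2 y (Finset.mem_univ y)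
    have hpos : 0 < C v y / (∑ z, C v z) := div_pos hCy (hCs v)
    rcases mul_eq_zero.mp h3 with h | h
    · exact absurd h (ne_of_gt hpos)
    · linarith
  obtain ⟨m, γ, hγ0, hγm, hstep⟩ := hconn x₀ b
  have hprop : ∀ i, i ≤ m → w (γ i) = M ∨ w b = M := by
    intro i
    induction i with
    | zero => intro _; left; rw [hγ0]
    | succ i ih =>
      intro hi
      rcases ih (by omega) with hwi | hwb'
      · by_cases hib : γ i = b
        · right; rw [← hib]; exact hwi
        · left; exact key (γ i) hwi hib (γ (i+1)) (hstep i (by omega))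
      · right; exact hwb'
  have hMb : w b = M := by
    rcases hprop m (le_refl m) with h | h
    · rw [hγm] at h; exact h
    · exact h
  intro x
  calc w x ≤ M := hx₀max x
    _ = 0 := by rw [← hMb, hwb]

lemma harmonic_eq_zero (hnonneg : ∀ x y, 0 ≤ C x y)
    (hCs : ∀ x, 0 < ∑ z, C x z)
    (hconn : ∀ x y : V, ∃ (m : ℕ) (w : ℕ → V), w 0 = x ∧ w m = y ∧
      ∀ i < m, 0 < C (w i) (w (i + 1)))
    (w : V → ℝ) (hwb : w b = 0)
    (hharm : ∀ x, x ≠ b → w x = ∑ y, C x y / (∑ z, C x z) * w y) :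
    ∀ x, w x = 0 := by
  have h1 := harmonic_le (b := b) hnonneg hCs hconn w hwb hharm
  have h2 := harmonic_le (b := b) hnonneg hCs hconn (fun v => - w v) (by simp [hwb]) ?_
  · intro x
    have := h1 x
    have := h2 x
    simp only [neg_nonpos] at *
    linarith
  · intro v hvb
    have h := hharm v hvb
    rw [h, ← Finset.sum_neg_distrib]
    exact Finset.sum_congr rfl fun y _ => (mul_neg _ _).symm

end Aux

/-- **Current as expected net crossings.**
On a finite connected conductance network, let `u` be harmonic off `{a, b}`
with `u b = 0`, normalized so that the total current out of `a` is `1`. Then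
for every edge `xy` the current `i_xy = C x y * (u x - u y)` equals the
expected net number of crossings of the edge from `x` to `y` by the walk
started at `a` and stopped when it hits `b`. -/
theorem current_as_expected_net_crossings
    {V : Type*} [Fintype V] [DecidableEq V]
    [MeasurableSpace V] [MeasurableSingletonClass V]
    (C : V → V → ℝ)
    (hsymm : ∀ x y, C x y = C y x)
    (hnonneg : ∀ x y, 0 ≤ C x y)
    (hloop : ∀ x, C x x = 0)
    (hconn : ∀ x y : V, ∃ (m : ℕ) (w : ℕ → V), w 0 = x ∧ w m = y ∧
      ∀ i < m, 0 < C (w i) (w (i + 1)))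
    (K : V → Measure (ℕ → V))
    [∀ z, IsProbabilityMeasure (K z)]
    (hK : ∀ (z : V) (n : ℕ) (γ : ℕ → V),
      K z {f | ∀ i ≤ n, f i = γ i} =
        ENNReal.ofReal ((if γ 0 = z then 1 else 0) *
          ∏ i ∈ Finset.range n, C (γ i) (γ (i + 1)) / ∑ u, C (γ i) u))
    (a b : V) (hab : a ≠ b)
    (u : V → ℝ)
    (hub : u b = 0)
    (hharm : ∀ x, x ≠ a → x ≠ b → u x = ∑ y, C x y / (∑ z, C x z) * u y)
    (hnorm : ∑ y, C a y * (u a - u y) = 1) :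
    ∀ x y : V, 0 < C x y →
      C x y * (u x - u y) =
        ∫ f, ((transitionCount b f x y : ℝ) - (transitionCount b f y x : ℝ))
          ∂(K a) := by
  intro x y hxy
  classical
  have hCs : ∀ v, 0 < ∑ z, C v z := by
    have key : ∀ v t : V, v ≠ t → 0 < ∑ z, C v z := by
      intro v t hvt
      obtain ⟨m, γ, h0, hm, hs⟩ := hconn v t
      have hm0 : m ≠ 0 := fun h => hvt (by rw [← h0, ← hm, h])
      have h1 := hs 0 (Nat.pos_of_ne_zero hm0)
      rw [h0] at h1
      exact lt_of_lt_of_le h1 (Finset.single_le_sum (fun z _ => hnonneg v z)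
        (Finset.mem_univ (γ 1)))
    intro v
    by_cases hva : v = a
    · exact key v b (hva ▸ hab)
    · exact key v a hva
  set G : V → ℝ := fun v => ∑' n, nker C b n a v with hG
  have hsumG : ∀ v, Summable (fun n => nker C b n a v) :=
    fun v => summable_nker (b := b) hnonneg hCs hconn a v
  have hGb : G b = 0 := by
    rw [hG]
    show (∑' n, nker C b n a b) = 0
    simp [nker_right_b]
  have hGrec : ∀ v, v ≠ b → G v = (if v = a then 1 else 0) + ∑ z, G z * nstep C z v := by
    intro v hvb
    rw [hG]
    show (∑' n, nker C b n a v) = _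
    rw [Summable.tsum_eq_zero_add (hsumG v)]
    congr 1
    · show nker C b 0 a v = _
      show (if a = v ∧ a ≠ b then (1:ℝ) else 0) = _
      by_cases hva : v = a
      · rw [if_pos ⟨hva.symm, hab⟩, if_pos hva]
      · rw [if_neg (fun hc => hva hc.1.symm), if_neg hva]
    · have hrw : ∀ n:ℕ, nker C b (n+1) a v = ∑ z, nker C b n a z * nstep C z v := by
        intro n; rw [nker_succ_right, if_neg hvb]
      rw [tsum_congr hrw, Summable.tsum_finsetSum (fun z _ => (hsumG z).mul_right _)]
      exact Finset.sum_congr rfl fun z _ => tsum_mul_right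
  -- identify u with the normalized Green function
  have hvf : ∀ v, u v = G v / (∑ z, C v z) := by
    have hwb : u b - G b / (∑ z, C b z) = 0 := by rw [hub, hGb]; simp
    have hharmw : ∀ v, v ≠ b → (u v - G v / (∑ z, C v z))
        = ∑ y', C v y' / (∑ z, C v z) * (u y' - G y' / (∑ z, C y' z)) := by
      intro v hvb
      have hu : u v = (if v = a then 1 else 0) / (∑ z, C v z)
          + ∑ y', C v y' / (∑ z, C v z) * u y' := by
        by_cases hva : v = a
        · rw [if_pos hva]
          have h1 : ∑ y', C v y' * (u v - u y') = 1 := by rw [hva]; exact hnorm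
          simp only [mul_sub] at h1
          rw [Finset.sum_sub_distrib, ← Finset.sum_mul] at h1
          have hCsv := hCs v
          have h2 : u v = (1 + ∑ y', C v y' * u y') / (∑ z, C v z) := by
            rw [eq_div_iff hCsv.ne']
            linear_combination h1
          rw [h2, add_div, Finset.sum_div]
          congr 1
          exact Finset.sum_congr rfl fun y' _ => (div_mul_eq_mul_div _ _ _).symm
        · rw [if_neg hva, zero_div, zero_add]
          exact hharm v hva hvb
      have hv2 : G v / (∑ z, C v z) = (if v = a then 1 else 0) / (∑ z, C v z)
          + ∑ y', C v y' / (∑ z, C v z) * (G y' / (∑ z, C y' z)) := by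
        rw [hGrec v hvb, add_div]
        congr 1
        rw [Finset.sum_div]
        refine Finset.sum_congr rfl fun z _ => ?_
        show (G z * (C z v / ∑ w', C z w')) / (∑ z', C v z')
            = C v z / (∑ z', C v z') * (G z / (∑ w', C z w'))
        rw [hsymm v z]
        ring
      rw [hu, hv2]
      simp only [mul_sub]
      rw [Finset.sum_sub_distrib]
      ring
    have hzero := harmonic_eq_zero (b := b) hnonneg hCs hconn
      (fun v => u v - G v / (∑ z, C v z)) hwb hharmw
    intro v
    have := hzero v
    linarith
  obtain ⟨hInt1, hI1⟩ := integral_transitionCount (b := b) hnonneg hCs hconn K hK a x y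
  obtain ⟨hInt2, hI2⟩ := integral_transitionCount (b := b) hnonneg hCs hconn K hK a y x
  rw [integral_sub hInt1 hInt2, hI1, hI2]
  rw [hvf x, hvf y]
  show C x y * (G x / (∑ z, C x z) - G y / (∑ z, C y z))
      = G x * nstep C x y - G y * nstep C y x
  rw [mul_sub]
  congr 1
  · show C x y * (G x / (∑ z, C x z)) = G x * (C x y / (∑ z, C x z))
    ring
  · show C x y * (G y / (∑ z, C y z)) = G y * (C y x / (∑ z, C y z))
    rw [hsymm x y]
    ring
end
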